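/- arXiv:2503.00864 — 7 statements merged into one kernel-verified Lean document; each statement's English description precedes it below -/
import Mathlib

section
/- Let X be a metric space with a factor subset A through a point x ∈ X, with cofactor B = π_A⁻¹(x). Then B is also a factor subset of X through x, and the map (π_A, π_B) : X → A × B is an isometry onto the ℓ²-product A × B. -/
/-- `IsL2Prod Φ` means `Φ : X → Y × Z` is a bijection identifying `X` with the
ℓ²-direct product of the metric spaces `Y` and `Z`. -/
def IsL2Prod {X Y Z : Type} [MetricSpace X] [MetricSpace Y] [MetricSpace Z]
    (Φ : X → Y × Z) : Prop :=
  Function.Bijective Φ ∧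
    ∀ p q : X, dist p q ^ 2 = dist (Φ p).1 (Φ q).1 ^ 2 + dist (Φ p).2 (Φ q).2 ^ 2

/-- `A` is a factor subset of `X` through `x`: some ℓ²-product decomposition of `X`
carries `A` onto the fiber of the first factor through `x`. -/
def IsFactorSubset {X : Type} [MetricSpace X] (A : Set X) (x : X) : Prop :=
  x ∈ A ∧ ∃ (Y Z : Type) (_ : MetricSpace Y) (_ : MetricSpace Z) (Φ : X → Y × Z),
    IsL2Prod Φ ∧ A = {p : X | (Φ p).2 = (Φ x).2}

/-- A line in a metric space: a subset isometric to `ℝ`. -/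
def IsLine {X : Type} [MetricSpace X] (ℓ : Set X) : Prop :=
  ∃ γ : ℝ → X, Isometry γ ∧ Set.range γ = ℓ

/-- A splitting line: a line carried onto a fiber `ℝ × {z₀}` by some
ℓ²-product decomposition `X ≅ ℝ × Z`. -/
def IsSplittingLine {X : Type} [MetricSpace X] (ℓ : Set X) : Prop :=
  IsLine ℓ ∧ ∃ (Z : Type) (_ : MetricSpace Z) (Φ : X → ℝ × Z) (z₀ : Z),
    IsL2Prod Φ ∧ Φ '' ℓ = Set.univ ×ˢ {z₀}

/-- `π` is the nearest-point projection onto `A`: every point has `π p` as its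
unique nearest point in `A`. -/
def IsNearestPointProj {X : Type} [MetricSpace X] (A : Set X) (π : X → X) : Prop :=
  ∀ p : X, π p ∈ A ∧ (∀ a ∈ A, dist p (π p) ≤ dist p a) ∧
    ∀ a ∈ A, dist p a = dist p (π p) → a = π p

/-- The subset `A`, with the induced metric, is isometric to a real Hilbert space. -/
def IsHilbertSubset {X : Type} [MetricSpace X] (A : Set X) : Prop :=
  ∃ (H : Type) (_ : NormedAddCommGroup H) (_ : InnerProductSpace ℝ H) (_ : CompleteSpace H)
    (f : A → H), Isometry f ∧ Function.Surjective f

lemma l2prod_proj {X Y Z : Type} [MetricSpace X] [MetricSpace Y] [MetricSpace Z]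
    (Φ : X → Y × Z) (hΦ : IsL2Prod Φ) (x : X) (A : Set X)
    (hA : A = {p : X | (Φ p).2 = (Φ x).2}) (π : X → X)
    (hπ : IsNearestPointProj A π) :
    ∀ p : X, Φ (π p) = ((Φ p).1, (Φ x).2) := by
  intro p
  obtain ⟨a, ha⟩ := hΦ.1.2 ((Φ p).1, (Φ x).2)
  have haA : a ∈ A := by rw [hA]; simp [ha]
  have hd : ∀ a' ∈ A, dist p a ≤ dist p a' := by
    intro a' ha'
    have h1 := hΦ.2 p a
    have h2 := hΦ.2 p a'
    rw [hA] at ha'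
    rw [ha, Set.mem_setOf_eq] at *
    rw [ha'] at h2
    have hsq : dist p a ^ 2 ≤ dist p a' ^ 2 := by
      rw [h1, h2]; simp [ha]
    nlinarith [dist_nonneg (x := p) (y := a), dist_nonneg (x := p) (y := a')]
  have heq : dist p a = dist p (π p) :=
    le_antisymm (hd (π p) (hπ p).1) ((hπ p).2.1 a haA)
  have := (hπ p).2.2 a haA heq
  rw [← this, ha]

/-- the cofactor `B = π_A⁻¹(x)` of a factor subset `A` through `x` is
again a factor subset through `x`, and `(π_A, π_B) : X → A × B` is an isometry onto
the ℓ²-product. -/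
theorem cofactor_isFactorSubset {X : Type} [MetricSpace X] (A : Set X) (x : X)
    (hA : IsFactorSubset A x) (πA : X → X) (hπA : IsNearestPointProj A πA)
    (B : Set X) (hB : B = πA ⁻¹' {x}) (πB : X → X) (hπB : IsNearestPointProj B πB) :
    IsFactorSubset B x ∧
    IsL2Prod (fun p : X => ((⟨πA p, (hπA p).1⟩ : A), (⟨πB p, (hπB p).1⟩ : B))) := by
  obtain ⟨hxA, Y, Z, _, _, Φ, hΦ, hAeq⟩ := hA
  have hinj := hΦ.1.1
  have hprojA := l2prod_proj Φ hΦ x A hAeq πA hπA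
  have hBchar : B = {p : X | (Φ p).1 = (Φ x).1} := by
    rw [hB]; ext p
    simp only [Set.mem_preimage, Set.mem_singleton_iff, Set.mem_setOf_eq]
    constructor
    · intro h
      have := hprojA p
      rw [h] at this
      exact (congrArg Prod.fst this).symm
    · intro h
      apply hinj
      rw [hprojA p, h]
  -- swapped decomposition
  set Φ' : X → Z × Y := fun p => ((Φ p).2, (Φ p).1) with hΦ'def
  have hΦ' : IsL2Prod Φ' := by
    constructor
    · exact (Prod.swap_bijective).comp hΦ.1
    · intro p q
      rw [hΦ.2 p q]; ring
  have hBchar' : B = {p : X | (Φ' p).2 = (Φ' x).2} := hBchar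
  have hprojB := l2prod_proj Φ' hΦ' x B hBchar' πB hπB
  have hprojB1 : ∀ p, (Φ (πB p)).1 = (Φ x).1 := fun p => congrArg Prod.snd (hprojB p)
  have hprojB2 : ∀ p, (Φ (πB p)).2 = (Φ p).2 := fun p => congrArg Prod.fst (hprojB p)
  have hxB : x ∈ B := by rw [hBchar]; exact rfl
  refine ⟨⟨hxB, Z, Y, inferInstance, inferInstance, Φ', hΦ', hBchar'⟩, ?_, ?_⟩
  · constructor
    · intro p q h
      simp only [Prod.mk.injEq, Subtype.mk.injEq] at h
      apply hinj
      have h1 : (Φ p).1 = (Φ q).1 := by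
        have := congrArg Φ h.1
        rw [hprojA p, hprojA q, Prod.mk.injEq] at this
        exact this.1
      have h2 : (Φ p).2 = (Φ q).2 := by
        rw [← hprojB2 p, ← hprojB2 q, h.2]
      exact Prod.ext h1 h2
    · rintro ⟨⟨a, haA⟩, ⟨b, hbB⟩⟩
      obtain ⟨p, hp⟩ := hΦ.1.2 ((Φ a).1, (Φ b).2)
      refine ⟨p, ?_⟩
      have ha2 : (Φ a).2 = (Φ x).2 := by rw [hAeq] at haA; exact haA
      have hb1 : (Φ b).1 = (Φ x).1 := by rw [hBchar] at hbB; exact hbB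
      have hπAp : πA p = a := by
        apply hinj
        rw [hprojA p, hp, ← ha2]
      have hπBp : πB p = b := by
        apply hinj
        have h2 : Φ (πB p) = ((Φ x).1, (Φ p).2) := Prod.ext (hprojB1 p) (hprojB2 p)
        rw [h2, hp, ← hb1]
      simp only [Prod.mk.injEq, Subtype.mk.injEq]
      exact ⟨hπAp, hπBp⟩
  · intro p q
    have hdA : dist (πA p) (πA q) ^ 2 = dist (Φ p).1 (Φ q).1 ^ 2 := by
      rw [hΦ.2, hprojA p, hprojA q]; simp
    have hdB : dist (πB p) (πB q) ^ 2 = dist (Φ p).2 (Φ q).2 ^ 2 := by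
      rw [hΦ.2, hprojB1 p, hprojB1 q, hprojB2 p, hprojB2 q]; simp
    simp only [Subtype.dist_eq]
    rw [hΦ.2 p q, hdA, hdB]
end

section
/- Let X = Y × Ȳ be an ℓ²-product of metric spaces and let γ : ℝ → X be an isometric embedding (a line). Then P^Y ∘ γ and P^Ȳ ∘ γ are geodesics of constant speeds α ≥ 0 and β ≥ 0 respectively, with α² + β² = 1; that is, d(P^Y(γ(s)), P^Y(γ(t))) = α|s−t| and d(P^Ȳ(γ(s)), P^Ȳ(γ(t))) = β|s−t| for all s, t ∈ ℝ. -/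
private lemma cross_trans {a1 b1 a2 b2 a3 b3 : ℝ} (h12 : a1 * b2 = a2 * b1)
    (h23 : a2 * b3 = a3 * b2) (h2 : a2 ^ 2 + b2 ^ 2 ≠ 0) : a1 * b3 = a3 * b1 := by
  have ha : a2 * (a1 * b3 - a3 * b1) = 0 := by linear_combination a1 * h23 + a3 * h12
  have hb : b2 * (a1 * b3 - a3 * b1) = 0 := by linear_combination b3 * h12 + b1 * h23
  have : a2 ≠ 0 ∨ b2 ≠ 0 := by
    by_contra h
    push_neg at h
    exact h2 (by rw [h.1, h.2]; ring)
  rcases this with h | h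
  · have := (mul_eq_zero.mp ha).resolve_left h
    linarith
  · have := (mul_eq_zero.mp hb).resolve_left h
    linarith

private lemma l2_split {a1 b1 a2 b2 A B L1 L2 : ℝ}
    (ha1 : 0 ≤ a1) (hb1 : 0 ≤ b1) (ha2 : 0 ≤ a2) (hb2 : 0 ≤ b2)
    (hA : 0 ≤ A) (hB : 0 ≤ B) (hL1 : 0 ≤ L1) (hL2 : 0 ≤ L2)
    (e1 : a1^2 + b1^2 = L1^2) (e2 : a2^2 + b2^2 = L2^2)
    (eA : A^2 + B^2 = (L1+L2)^2)
    (tA : A ≤ a1 + a2) (tB : B ≤ b1 + b2) :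
    A = a1 + a2 ∧ B = b1 + b2 ∧ a1 * b2 = a2 * b1 := by
  have hS : 0 ≤ a1*a2 + b1*b2 := by positivity
  have hL12 : L1^2 * L2^2 = (a1^2+b1^2) * (a2^2+b2^2) := by rw [e1, e2]
  have hsq2 : (a1*a2 + b1*b2)^2 ≤ (L1*L2)^2 := by
    nlinarith [sq_nonneg (a1*b2 - a2*b1), hL12]
  have hcs : a1*a2 + b1*b2 ≤ L1*L2 := by
    calc a1*a2 + b1*b2 = Real.sqrt ((a1*a2 + b1*b2)^2) := (Real.sqrt_sq hS).symm
      _ ≤ Real.sqrt ((L1*L2)^2) := Real.sqrt_le_sqrt hsq2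
      _ = L1*L2 := Real.sqrt_sq (mul_nonneg hL1 hL2)
  have hA2' : A^2 ≤ (a1+a2)^2 := by nlinarith
  have hB2' : B^2 ≤ (b1+b2)^2 := by nlinarith
  have hge : L1*L2 ≤ a1*a2 + b1*b2 := by nlinarith [hA2', hB2', e1, e2, eA]
  have heq : a1*a2 + b1*b2 = L1*L2 := le_antisymm hcs hge
  have hsq : A^2 + B^2 = (a1+a2)^2 + (b1+b2)^2 := by
    linear_combination eA - e1 - e2 - 2 * heq
  have hAe : A^2 = (a1+a2)^2 := by linarith
  have hBe : B^2 = (b1+b2)^2 := by linarith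
  have h1 : A = a1 + a2 := by
    calc A = Real.sqrt (A^2) := (Real.sqrt_sq hA).symm
      _ = Real.sqrt ((a1+a2)^2) := by rw [hAe]
      _ = a1 + a2 := Real.sqrt_sq (by linarith)
  have h2 : B = b1 + b2 := by
    calc B = Real.sqrt (B^2) := (Real.sqrt_sq hB).symm
      _ = Real.sqrt ((b1+b2)^2) := by rw [hBe]
      _ = b1 + b2 := Real.sqrt_sq (by linarith)
  refine ⟨h1, h2, ?_⟩
  have hz : (a1*b2 - a2*b1)^2 = 0 := by
    linear_combination (-(1:ℝ)) * hL12 - (a1*a2+b1*b2+L1*L2) * heq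
  have := pow_eq_zero_iff (n := 2) (by norm_num) |>.mp hz
  linarith

private lemma line_aux (f g : ℝ → ℝ → ℝ)
    (hf0 : ∀ s t, 0 ≤ f s t) (hg0 : ∀ s t, 0 ≤ g s t)
    (hft : ∀ s t u, f s u ≤ f s t + f t u) (hgt : ∀ s t u, g s u ≤ g s t + g t u)
    (hn : ∀ s t, f s t ^ 2 + g s t ^ 2 = (t - s) ^ 2) :
    ∀ s t, s ≤ t → f s t = f 0 1 * (t - s) ∧ g s t = g 0 1 * (t - s) := by
  have key : ∀ s t u : ℝ, s ≤ t → t ≤ u →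
      f s u = f s t + f t u ∧ g s u = g s t + g t u ∧
      f s t * g t u = f t u * g s t := by
    intro s t u hst htu
    exact l2_split (hf0 s t) (hg0 s t) (hf0 t u) (hg0 t u) (hf0 s u) (hg0 s u)
      (by linarith) (by linarith) (hn s t) (hn t u)
      (by rw [hn s u]; ring) (hft s t u) (hgt s t u)
  have step1 : ∀ a s b : ℝ, a ≤ s → s ≤ b → f s b * g a b = f a b * g s b := by
    intro a s b h1 h2
    obtain ⟨e1, e2, e3⟩ := key a s b h1 h2
    linear_combination f s b * e2 - g s b * e1 - e3
  have step2 : ∀ s t b : ℝ, s ≤ t → t ≤ b → f s t * g s b = f s b * g s t := by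
    intro s t b h1 h2
    obtain ⟨e1, e2, e3⟩ := key s t b h1 h2
    linear_combination f s t * e2 - g s t * e1 + e3
  have psub : ∀ a s t b : ℝ, a ≤ s → s ≤ t → t ≤ b →
      f s t * g a b = f a b * g s t := by
    intro a s t b h1 h2 h3
    by_cases hsb : s < b
    · have hmid : f s b ^ 2 + g s b ^ 2 ≠ 0 := by
        rw [hn s b]
        exact pow_ne_zero 2 (sub_ne_zero.mpr hsb.ne')
      exact cross_trans (step2 s t b h2 h3) (step1 a s b h1 hsb.le) hmid
    · have hts : t = s := le_antisymm (h3.trans (not_lt.mp hsb)) h2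
      have h0 : f s t ^ 2 + g s t ^ 2 = 0 := by rw [hn s t, hts]; ring
      have hf' : f s t = 0 := by nlinarith [hf0 s t, hg0 s t, sq_nonneg (f s t), sq_nonneg (g s t)]
      have hg' : g s t = 0 := by nlinarith [hf0 s t, hg0 s t, sq_nonneg (f s t), sq_nonneg (g s t)]
      rw [hf', hg']; ring
  intro s t hst
  set a : ℝ := min s 0 with ha
  set b : ℝ := max t 1 with hb
  have hab : a < b := lt_of_le_of_lt (min_le_right s 0) (lt_of_lt_of_le one_pos (le_max_right t 1))
  have hmid : f a b ^ 2 + g a b ^ 2 ≠ 0 := by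
    rw [hn a b]
    exact pow_ne_zero 2 (sub_ne_zero.mpr hab.ne')
  have c1 := psub a s t b (min_le_left s 0) hst (le_max_left t 1)
  have c2 := psub a 0 1 b (min_le_right s 0) zero_le_one (le_max_right t 1)
  have hpar : f s t * g 0 1 = f 0 1 * g s t := cross_trans c1 c2.symm hmid
  have h01 : f 0 1 ^ 2 + g 0 1 ^ 2 = 1 := by
    have := hn 0 1; norm_num at this; exact this
  have hst' := hn s t
  constructor
  · have hp2 : f s t ^ 2 = (f 0 1 * (t - s)) ^ 2 := by
      linear_combination (f 0 1)^2 * hst' - (f s t)^2 * h01 +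
        (f s t * g 0 1 + f 0 1 * g s t) * hpar
    calc f s t = Real.sqrt (f s t ^ 2) := (Real.sqrt_sq (hf0 s t)).symm
      _ = Real.sqrt ((f 0 1 * (t - s)) ^ 2) := by rw [hp2]
      _ = f 0 1 * (t - s) := Real.sqrt_sq (mul_nonneg (hf0 0 1) (by linarith))
  · have hp2 : g s t ^ 2 = (g 0 1 * (t - s)) ^ 2 := by
      linear_combination (g 0 1)^2 * hst' - (g s t)^2 * h01 -
        (f s t * g 0 1 + f 0 1 * g s t) * hpar
    calc g s t = Real.sqrt (g s t ^ 2) := (Real.sqrt_sq (hg0 s t)).symm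
      _ = Real.sqrt ((g 0 1 * (t - s)) ^ 2) := by rw [hp2]
      _ = g 0 1 * (t - s) := Real.sqrt_sq (mul_nonneg (hg0 0 1) (by linarith))

/-- the projections of a line in an ℓ²-product are constant speed
geodesics with speeds `α, β ≥ 0`, `α² + β² = 1`. -/
theorem line_projections_constant_speed {X Y Z : Type}
    [MetricSpace X] [MetricSpace Y] [MetricSpace Z]
    (Φ : X → Y × Z) (hΦ : IsL2Prod Φ) (γ : ℝ → X) (hγ : Isometry γ) :
    ∃ α β : ℝ, 0 ≤ α ∧ 0 ≤ β ∧ α ^ 2 + β ^ 2 = 1 ∧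
      (∀ s t : ℝ, dist (Φ (γ s)).1 (Φ (γ t)).1 = α * |s - t|) ∧
      (∀ s t : ℝ, dist (Φ (γ s)).2 (Φ (γ t)).2 = β * |s - t|) := by
  obtain ⟨-, hd⟩ := hΦ
  have hn : ∀ s t : ℝ, dist (Φ (γ s)).1 (Φ (γ t)).1 ^ 2 + dist (Φ (γ s)).2 (Φ (γ t)).2 ^ 2
      = (t - s) ^ 2 := by
    intro s t
    have h1 := hd (γ s) (γ t)
    rw [hγ.dist_eq, Real.dist_eq] at h1
    rw [← h1, sq_abs]; ring
  have haux := line_aux (fun s t => dist (Φ (γ s)).1 (Φ (γ t)).1)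
    (fun s t => dist (Φ (γ s)).2 (Φ (γ t)).2)
    (fun s t => dist_nonneg) (fun s t => dist_nonneg)
    (fun s t u => dist_triangle _ _ _) (fun s t u => dist_triangle _ _ _) hn
  beta_reduce at haux
  refine ⟨dist (Φ (γ 0)).1 (Φ (γ 1)).1, dist (Φ (γ 0)).2 (Φ (γ 1)).2,
    dist_nonneg, dist_nonneg, ?_, ?_, ?_⟩
  · have := hn 0 1; norm_num at this; exact this
  · intro s t
    rcases le_total s t with h | h
    · rw [(haux s t h).1, abs_of_nonpos (by linarith : s - t ≤ 0)]; ring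
    · rw [dist_comm, (haux t s h).1, abs_of_nonneg (by linarith : 0 ≤ s - t)]
  · intro s t
    rcases le_total s t with h | h
    · rw [(haux s t h).2, abs_of_nonpos (by linarith : s - t ≤ 0)]; ring
    · rw [dist_comm, (haux t s h).2, abs_of_nonneg (by linarith : 0 ≤ s - t)]
end

section
/- Let X = Y × Ȳ be an ℓ²-product of metric spaces and let γ₁, γ₂ : ℝ → X be isometric embeddings (lines) such that t ↦ d(γ₁(t), γ₂(t)) is constant (parallel lines). Then the projected geodesics P^Y ∘ γ₁ and P^Y ∘ γ₂ have the same constant speed: there is α ≥ 0 such that d(P^Y(γᵢ(s)), P^Y(γᵢ(t))) = α|s−t| for i = 1,2 and all s,t ∈ ℝ. -/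
lemma aux_triple (p q r p' q' r' u v : ℝ)
    (hp : 0 ≤ p) (hq : 0 ≤ q) (hr : 0 ≤ r) (hp' : 0 ≤ p') (hq' : 0 ≤ q') (hr' : 0 ≤ r')
    (hu : 0 < u) (hv : 0 < v)
    (h1 : p^2 + p'^2 = u^2) (h2 : q^2 + q'^2 = v^2) (h3 : r^2 + r'^2 = (u+v)^2)
    (htr : r ≤ p + q) (htr' : r' ≤ p' + q') :
    p * v = q * u ∧ r = p + q := by
  have hcs : p*q + p'*q' ≤ u*v := by
    nlinarith [sq_nonneg (p*q' - p'*q), sq_nonneg (u*v - (p*q+p'*q')), mul_pos hu hv,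
      mul_nonneg (mul_nonneg hp hq) (mul_nonneg hp' hq')]
  have hge : u*v ≤ p*q + p'*q' := by
    nlinarith [mul_le_mul htr htr hr (by linarith : (0:ℝ) ≤ p + q),
      mul_le_mul htr' htr' hr' (by linarith : (0:ℝ) ≤ p' + q')]
  have heq : p*q + p'*q' = u*v := le_antisymm hcs hge
  have h0 : (p*q' - p'*q)^2 = 0 := by
    linear_combination (q^2+q'^2)*h1 + u^2*h2 - (p*q+p'*q'+u*v)*heq
  have hpq : p*q' = p'*q := by
    have := pow_eq_zero_iff (n := 2) (by norm_num) |>.1 h0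
    linarith
  have hsq : (p*v)^2 = (q*u)^2 := by
    linear_combination q^2*h1 - p^2*h2 + (p*q'+p'*q)*hpq
  have h4 : (p*v - q*u) * (p*v + q*u) = 0 := by linear_combination hsq
  have hpv : p * v = q * u := by
    rcases mul_eq_zero.1 h4 with h | h
    · linarith
    · have h5 : p * v = 0 := le_antisymm (by nlinarith [mul_nonneg hq hu.le]) (mul_nonneg hp hv.le)
      have h6 : q * u = 0 := le_antisymm (by nlinarith [mul_nonneg hp hv.le]) (mul_nonneg hq hu.le)
      rw [h5, h6]
  refine ⟨hpv, ?_⟩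
  have hle1 : r^2 ≤ (p+q)^2 := pow_le_pow_left₀ hr htr 2
  have hle2 : r'^2 ≤ (p'+q')^2 := pow_le_pow_left₀ hr' htr' 2
  have hsum : r^2 + r'^2 = (p+q)^2 + (p'+q')^2 := by
    linear_combination h3 - h1 - h2 - 2*heq
  have h7 : r^2 = (p+q)^2 := by linarith
  have h8 : (r - (p+q)) * (r + (p+q)) = 0 := by linear_combination h7
  rcases mul_eq_zero.1 h8 with h | h
  · linarith
  · linarith

lemma line_proj_speed {Y Z : Type} [MetricSpace Y] [MetricSpace Z]
    (y : ℝ → Y) (z : ℝ → Z)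
    (hd : ∀ s t : ℝ, dist (y s) (y t) ^ 2 + dist (z s) (z t) ^ 2 = (s - t) ^ 2) :
    ∃ α : ℝ, 0 ≤ α ∧ ∀ s t : ℝ, dist (y s) (y t) = α * |s - t| := by
  set D : ℝ → ℝ → ℝ := fun a b => dist (y a) (y b) with hD
  -- triple lemma
  have step1 : ∀ a b c : ℝ, a < b → b < c →
      D a b * (c - b) = D b c * (b - a) ∧ D a c = D a b + D b c := by
    intro a b c hab hbc
    have h1 := hd a b
    have h2 := hd b c
    have h3 := hd a c
    have hac : (a - c)^2 = ((b-a) + (c-b))^2 := by ring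
    have := aux_triple (D a b) (D b c) (D a c)
      (dist (z a) (z b)) (dist (z b) (z c)) (dist (z a) (z c))
      (b - a) (c - b) dist_nonneg dist_nonneg dist_nonneg
      dist_nonneg dist_nonneg dist_nonneg (by linarith) (by linarith)
      (by rw [hD]; simp only; nlinarith [hd a b])
      (by rw [hD]; simp only; nlinarith [hd b c])
      (by rw [hD]; simp only; nlinarith [hd a c])
      (dist_triangle (y a) (y b) (y c)) (dist_triangle (z a) (z b) (z c))
    exact this
  -- nested intervals lemma
  have step2 : ∀ a b m M : ℝ, m < a → a < b → b < M →
      D a b * (M - m) = D m M * (b - a) := by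
    intro a b m M hma hab hbM
    obtain ⟨t1, t1'⟩ := step1 m a b hma hab
    obtain ⟨t2, t2'⟩ := step1 m b M (hma.trans hab) hbM
    have e1 : D m b * (b - a) = D a b * (b - m) := by
      rw [t1']; linarith [t1]
    have e2 : D m M * (b - m) = D m b * (M - m) := by
      rw [t2']; linarith [t2]
    have hbm : (0:ℝ) < b - m := by linarith
    have : D a b * (M - m) * (b - m) = D m M * (b - a) * (b - m) := by
      nlinarith [e1, e2]
    exact mul_right_cancel₀ (ne_of_gt hbm) this
  refine ⟨D 0 1, dist_nonneg, ?_⟩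
  have key : ∀ a b : ℝ, a < b → D a b = D 0 1 * (b - a) := by
    intro a b hab
    set m : ℝ := min a 0 - 1 with hm
    set M : ℝ := max b 1 + 1 with hMdef
    have hma : m < a := by have := min_le_left a 0; simp only [hm]; linarith
    have hm0 : m < 0 := by have := min_le_right a 0; simp only [hm]; linarith
    have hbM : b < M := by have := le_max_left b 1; simp only [hMdef]; linarith
    have h1M : (1:ℝ) < M := by have := le_max_right b 1; simp only [hMdef]; linarith
    have e1 := step2 a b m M hma hab hbM
    have e2 := step2 0 1 m M hm0 one_pos h1M
    have hMm : (0:ℝ) < M - m := by linarith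
    have : D a b * (M - m) = D 0 1 * (b - a) * (M - m) := by
      rw [e1]; nlinarith [e2]
    exact mul_right_cancel₀ (ne_of_gt hMm) this
  intro s t
  rcases lt_trichotomy s t with h | h | h
  · rw [abs_of_neg (by linarith : s - t < 0)]
    have := key s t h; linarith [this]
  · subst h; simp
  · rw [abs_of_pos (by linarith : 0 < s - t)]
    have := key t s h
    rw [show D t s = D s t from dist_comm (y t) (y s)] at this
    linarith [this]

/-- parallel lines in an ℓ²-product project onto geodesics of the
same constant speed. -/
theorem parallel_lines_same_projected_speed {X Y Z : Type}
    [MetricSpace X] [MetricSpace Y] [MetricSpace Z]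
    (Φ : X → Y × Z) (hΦ : IsL2Prod Φ) (γ₁ γ₂ : ℝ → X)
    (h₁ : Isometry γ₁) (h₂ : Isometry γ₂)
    (hpar : ∀ t : ℝ, dist (γ₁ t) (γ₂ t) = dist (γ₁ 0) (γ₂ 0)) :
    ∃ α : ℝ, 0 ≤ α ∧
      (∀ s t : ℝ, dist (Φ (γ₁ s)).1 (Φ (γ₁ t)).1 = α * |s - t|) ∧
      (∀ s t : ℝ, dist (Φ (γ₂ s)).1 (Φ (γ₂ t)).1 = α * |s - t|) := by
  have hc : ∀ (γ : ℝ → X), Isometry γ → ∀ s t : ℝ,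
      dist (Φ (γ s)).1 (Φ (γ t)).1 ^ 2 + dist (Φ (γ s)).2 (Φ (γ t)).2 ^ 2 = (s - t) ^ 2 := by
    intro γ hγ s t
    have h := hΦ.2 (γ s) (γ t)
    rw [hγ.dist_eq, Real.dist_eq] at h
    rw [← h, sq_abs]
  obtain ⟨α₁, hα₁, hy₁⟩ := line_proj_speed (fun t => (Φ (γ₁ t)).1) (fun t => (Φ (γ₁ t)).2)
    (hc γ₁ h₁)
  obtain ⟨α₂, hα₂, hy₂⟩ := line_proj_speed (fun t => (Φ (γ₂ t)).1) (fun t => (Φ (γ₂ t)).2)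
    (hc γ₂ h₂)
  set c : ℝ := dist (γ₁ 0) (γ₂ 0) with hc0
  have hc0n : 0 ≤ c := dist_nonneg
  have hbd : ∀ t : ℝ, dist (Φ (γ₁ t)).1 (Φ (γ₂ t)).1 ≤ c := by
    intro t
    have h := hΦ.2 (γ₁ t) (γ₂ t)
    rw [hpar t] at h
    nlinarith [dist_nonneg (x := (Φ (γ₁ t)).1) (y := (Φ (γ₂ t)).1),
      sq_nonneg (dist (Φ (γ₁ t)).2 (Φ (γ₂ t)).2)]
  have key : ∀ t : ℝ, 0 < t → (α₁ - α₂) * t ≤ 2 * c ∧ (α₂ - α₁) * t ≤ 2 * c := by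
    intro t ht
    have e1 := hy₁ t 0
    have e2 := hy₂ t 0
    rw [sub_zero, abs_of_pos ht] at e1 e2
    have tri := dist_triangle4 (Φ (γ₁ t)).1 (Φ (γ₂ t)).1 (Φ (γ₂ 0)).1 (Φ (γ₁ 0)).1
    have tri' := dist_triangle4 (Φ (γ₂ t)).1 (Φ (γ₁ t)).1 (Φ (γ₁ 0)).1 (Φ (γ₂ 0)).1
    have b1 := hbd t
    have b0 := hbd 0
    have c1 : dist (Φ (γ₂ t)).1 (Φ (γ₁ t)).1 ≤ c := by
      rw [dist_comm]; exact b1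
    have c0 : dist (Φ (γ₂ 0)).1 (Φ (γ₁ 0)).1 ≤ c := by
      rw [dist_comm]; exact b0
    have d1 : dist (Φ (γ₂ 0)).1 (Φ (γ₂ t)).1 = α₂ * t := by
      rw [dist_comm]; exact e2
    have d2 : dist (Φ (γ₁ 0)).1 (Φ (γ₁ t)).1 = α₁ * t := by
      rw [dist_comm]; exact e1
    constructor
    · nlinarith [tri]
    · nlinarith [tri']
  have habs : ∀ a : ℝ, (∀ t : ℝ, 0 < t → a * t ≤ 2 * c) → a ≤ 0 := by
    intro a H
    by_contra h
    push_neg at h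
    have ht : 0 < (2 * c + 1) / a := div_pos (by linarith) h
    have := H _ ht
    rw [mul_div_cancel₀ _ (ne_of_gt h)] at this
    linarith
  have h12 : α₁ = α₂ := by
    have l1 := habs (α₁ - α₂) (fun t ht => (key t ht).1)
    have l2 := habs (α₂ - α₁) (fun t ht => (key t ht).2)
    linarith
  exact ⟨α₁, hα₁, hy₁, by rw [h12]; exact hy₂⟩
end

section
/- Let X = Y × Ȳ be an ℓ²-product, let ℓ ⊂ X be a line, and suppose the projection P^Y(ℓ) is not a single point. Then P^Y(ℓ) is a line in Y (an isometric copy of ℝ), and the restriction P^Y : ℓ → P^Y(ℓ) is a bijection, indeed a similarity with factor α for some 0 < α ≤ 1. -/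
lemma key_prop {a₁ b₁ a₂ b₂ a₃ b₃ c₁ c₂ : ℝ}
    (ha₁ : 0 ≤ a₁) (hb₁ : 0 ≤ b₁) (ha₂ : 0 ≤ a₂) (hb₂ : 0 ≤ b₂)
    (ha₃ : 0 ≤ a₃) (hb₃ : 0 ≤ b₃) (hc₁ : 0 < c₁) (hc₂ : 0 < c₂)
    (h1 : a₁^2 + b₁^2 = c₁^2) (h2 : a₂^2 + b₂^2 = c₂^2)
    (h3 : a₃^2 + b₃^2 = (c₁+c₂)^2)
    (hta : a₃ ≤ a₁ + a₂) (htb : b₃ ≤ b₁ + b₂) :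
    a₁ * c₂ = a₂ * c₁ ∧ a₃ = a₁ + a₂ := by
  have hcs : a₁*a₂ + b₁*b₂ ≤ c₁*c₂ := by
    nlinarith [sq_nonneg (a₁*b₂ - a₂*b₁), mul_pos hc₁ hc₂, mul_nonneg ha₁ ha₂, mul_nonneg hb₁ hb₂]
  have hA : a₃^2 ≤ (a₁+a₂)^2 := pow_le_pow_left₀ ha₃ hta 2
  have hB : b₃^2 ≤ (b₁+b₂)^2 := pow_le_pow_left₀ hb₃ htb 2
  have heq : a₁*a₂ + b₁*b₂ = c₁*c₂ := by nlinarith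
  have e : a₃^2 + b₃^2 = (a₁+a₂)^2 + (b₁+b₂)^2 := by
    linear_combination h3 - h1 - h2 - 2*heq
  have ha3 : a₃^2 = (a₁+a₂)^2 := by linarith
  have hS : a₃ = a₁ + a₂ := (sq_eq_sq₀ ha₃ (by linarith)).mp ha3
  have hz : (a₁*b₂ - a₂*b₁)^2 = 0 := by
    linear_combination (a₂^2+b₂^2)*h1 + c₁^2*h2 - (a₁*a₂+b₁*b₂+c₁*c₂)*heq
  have hcross : a₁*b₂ = a₂*b₁ := by
    have := sq_eq_zero_iff.mp hz; linarith
  have hsq : (a₁*c₂)^2 = (a₂*c₁)^2 := by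
    linear_combination a₂^2*h1 - a₁^2*h2 + (a₁*b₂+a₂*b₁)*hcross
  exact ⟨(sq_eq_sq₀ (mul_nonneg ha₁ hc₂.le) (mul_nonneg ha₂ hc₁.le)).mp hsq, hS⟩

/-- if the projection of a line `ℓ ⊂ X = Y × Z` to `Y` is not a point,
then it is a line in `Y` and the projection restricted to `ℓ` is a bijective
similarity with factor `0 < α ≤ 1`. -/
theorem line_projection_line_or_point {X Y Z : Type}
    [MetricSpace X] [MetricSpace Y] [MetricSpace Z]
    (Φ : X → Y × Z) (hΦ : IsL2Prod Φ) (ℓ : Set X) (hℓ : IsLine ℓ)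
    (hnp : ¬ ∃ y : Y, (fun p : X => (Φ p).1) '' ℓ = {y}) :
    IsLine ((fun p : X => (Φ p).1) '' ℓ) ∧
    Set.InjOn (fun p : X => (Φ p).1) ℓ ∧
    ∃ α : ℝ, 0 < α ∧ α ≤ 1 ∧
      ∀ p ∈ ℓ, ∀ q ∈ ℓ, dist (Φ p).1 (Φ q).1 = α * dist p q := by
  obtain ⟨γ, hγ, hrange⟩ := hℓ
  set f : ℝ → Y := fun t => (Φ (γ t)).1 with hfdef
  set g : ℝ → Z := fun t => (Φ (γ t)).2 with hgdef
  have hdist : ∀ t s : ℝ, dist (f t) (f s) ^ 2 + dist (g t) (g s) ^ 2 = |t - s| ^ 2 := by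
    intro t s
    have h := hΦ.2 (γ t) (γ s)
    rw [hγ.dist_eq, Real.dist_eq] at h
    exact h.symm
  -- key proportionality facts for a split interval
  have key : ∀ t u s : ℝ, t < u → u < s →
      dist (f t) (f u) * (s - u) = dist (f u) (f s) * (u - t) ∧
      dist (f t) (f s) = dist (f t) (f u) + dist (f u) (f s) := by
    intro t u s htu hus
    have h1 := hdist t u
    have h2 := hdist u s
    have h3 := hdist t s
    rw [abs_of_neg (by linarith : t - u < 0)] at h1
    rw [abs_of_neg (by linarith : u - s < 0)] at h2
    rw [abs_of_neg (by linarith : t - s < 0)] at h3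
    have h3' : dist (f t) (f s) ^ 2 + dist (g t) (g s) ^ 2 = ((u - t) + (s - u)) ^ 2 := by
      rw [h3]; ring
    have h1' : dist (f t) (f u) ^ 2 + dist (g t) (g u) ^ 2 = (u - t) ^ 2 := by
      rw [h1]; ring
    have h2' : dist (f u) (f s) ^ 2 + dist (g u) (g s) ^ 2 = (s - u) ^ 2 := by
      rw [h2]; ring
    exact key_prop dist_nonneg dist_nonneg dist_nonneg dist_nonneg
      dist_nonneg dist_nonneg (by linarith) (by linarith) h1' h2' h3'
      (dist_triangle (f t) (f u) (f s)) (dist_triangle (g t) (g u) (g s))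
  have L : ∀ t u s : ℝ, t < u → u < s →
      dist (f t) (f s) * (u - t) = dist (f t) (f u) * (s - t) := by
    intro t u s htu hus
    obtain ⟨hP, hS⟩ := key t u s htu hus
    linear_combination (u - t) * hS - hP
  have R : ∀ t u s : ℝ, t < u → u < s →
      dist (f t) (f s) * (s - u) = dist (f u) (f s) * (s - t) := by
    intro t u s htu hus
    obtain ⟨hP, hS⟩ := key t u s htu hus
    linear_combination (s - u) * hS + hP
  set α : ℝ := dist (f 0) (f 1) with hαdef
  have hmain : ∀ t s : ℝ, t < s → dist (f t) (f s) = α * (s - t) := by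
    intro t s hts
    set m : ℝ := min t 0 - 1 with hmdef
    set M : ℝ := max s 1 + 1 with hMdef
    have hmt : m < t := by have := min_le_left t 0; simp only [hmdef]; linarith
    have hm0 : m < 0 := by have := min_le_right t 0; simp only [hmdef]; linarith
    have hsM : s < M := by have := le_max_left s 1; simp only [hMdef]; linarith
    have h1M : (1:ℝ) < M := by have := le_max_right s 1; simp only [hMdef]; linarith
    have h0M : (0:ℝ) < M := by linarith
    have htM : t < M := lt_trans hts hsM
    have hA : dist (f 0) (f M) = α * M := by
      have h := L 0 1 M zero_lt_one h1M
      have : dist (f 0) (f M) * 1 = α * M := by linear_combination h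
      linarith
    have hB : dist (f m) (f M) = α * (M - m) := by
      have h := R m 0 M hm0 h0M
      exact mul_right_cancel₀ h0M.ne' (by linear_combination h + (M - m) * hA)
    have hC : dist (f t) (f M) = α * (M - t) := by
      have h := R m t M hmt htM
      exact mul_right_cancel₀ (by linarith : M - m ≠ 0)
        (by linear_combination -h + (M - t) * hB)
    have h := L t s M hts hsM
    exact mul_right_cancel₀ (by linarith : M - t ≠ 0)
      (by linear_combination -h + (s - t) * hC)
  have hall : ∀ t s : ℝ, dist (f t) (f s) = α * |t - s| := by
    intro t s
    rcases lt_trichotomy t s with h | h | h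
    · rw [hmain t s h, abs_of_neg (by linarith : t - s < 0)]; ring
    · simp [h]
    · rw [dist_comm, hmain s t h, abs_of_pos (by linarith : 0 < t - s)]
  have hα0 : 0 ≤ α := dist_nonneg
  have hαpos : 0 < α := by
    rcases hα0.lt_or_eq with h | h
    · exact h
    · exfalso; apply hnp
      refine ⟨f 0, ?_⟩
      rw [← hrange, ← Set.range_comp]
      have hconst : ∀ t, f t = f 0 := by
        intro t
        have := hall t 0
        rw [← h] at this
        simpa [dist_eq_zero] using this
      ext y
      constructor
      · rintro ⟨t, rfl⟩; exact hconst t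
      · rintro rfl; exact ⟨0, (hconst 0).symm⟩
  have hα1 : α ≤ 1 := by
    have h := hdist 0 1
    have : α ^ 2 ≤ 1 := by
      have : |(0:ℝ) - 1| = 1 := by norm_num
      rw [this] at h
      nlinarith [sq_nonneg (dist (g 0) (g 1))]
    nlinarith
  have hsim : ∀ p ∈ ℓ, ∀ q ∈ ℓ, dist (Φ p).1 (Φ q).1 = α * dist p q := by
    intro p hp q hq
    rw [← hrange] at hp hq
    obtain ⟨t, rfl⟩ := hp
    obtain ⟨s, rfl⟩ := hq
    rw [hγ.dist_eq, Real.dist_eq]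
    exact hall t s
  refine ⟨?_, ?_, α, hαpos, hα1, hsim⟩
  · refine ⟨fun t => f (t / α), ?_, ?_⟩
    · apply Isometry.of_dist_eq
      intro a b
      rw [hall, Real.dist_eq, div_sub_div_same, abs_div, abs_of_pos hαpos,
        mul_div_cancel₀ _ hαpos.ne']
    · rw [← hrange, ← Set.range_comp]
      ext y
      constructor
      · rintro ⟨t, rfl⟩; exact ⟨t / α, rfl⟩
      · rintro ⟨t, rfl⟩
        refine ⟨t * α, ?_⟩
        show f (t * α / α) = f t
        rw [mul_div_cancel_right₀ _ hαpos.ne']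
  · intro p hp q hq hpq
    have h := hsim p hp q hq
    simp only at hpq
    rw [hpq, dist_self] at h
    have : dist p q = 0 := by
      rcases mul_eq_zero.mp h.symm with h' | h'
      · exact absurd h' hαpos.ne'
      · exact h'
    exact dist_eq_zero.mp this
end

section
/- Let X be a complete metric space and x ∈ X, and let (A_α)_{α ∈ I} be a chain (totally ordered by inclusion) of factor subsets of X through x, each isometric to a real Hilbert space. Then the closure H of the union ⋃_α A_α is isometric to a real Hilbert space. -/
open scoped RealInnerProductSpace

noncomputable section

private lemma eq_of_sq_eq_sq' {a b : ℝ} (ha : 0 ≤ a) (hb : 0 ≤ b) (h : a ^ 2 = b ^ 2) :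
    a = b := by
  rw [← Real.sqrt_sq ha, ← Real.sqrt_sq hb, h]

/-- The kernel bilinear form on finitely supported functions. -/
private noncomputable def kerB {α : Type} (K : α → α → ℝ) :
    (α →₀ ℝ) →ₗ[ℝ] (α →₀ ℝ) →ₗ[ℝ] ℝ :=
  Finsupp.lift _ ℝ α fun p => Finsupp.lift ℝ ℝ α fun q => K p q

private lemma kerB_apply {α : Type} (K : α → α → ℝ) (f g : α →₀ ℝ) :
    kerB K f g = f.sum fun p c => g.sum fun q d => c * (d * K p q) := by
  rw [kerB, Finsupp.lift_apply, Finsupp.sum, Finsupp.sum]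
  rw [LinearMap.coe_sum, Finset.sum_apply]
  refine Finset.sum_congr rfl fun p hp => ?_
  rw [LinearMap.smul_apply, Finsupp.lift_apply, smul_eq_mul, Finsupp.sum, Finsupp.sum,
    Finset.mul_sum]
  exact Finset.sum_congr rfl fun q hq => by rw [smul_eq_mul]

private lemma kerB_symm {α : Type} (K : α → α → ℝ) (hK : ∀ p q, K p q = K q p)
    (f g : α →₀ ℝ) : kerB K f g = kerB K g f := by
  rw [kerB_apply, kerB_apply]
  simp only [Finsupp.sum]
  rw [Finset.sum_comm]
  refine Finset.sum_congr rfl fun q hq => ?_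
  refine Finset.sum_congr rfl fun p hp => ?_
  rw [hK p q]; ring

private lemma kerB_eq_inner {α H : Type} [NormedAddCommGroup H] [InnerProductSpace ℝ H]
    (K : α → α → ℝ) (G : α → H) (f g : α →₀ ℝ)
    (hK : ∀ p ∈ f.support, ∀ q ∈ g.support, K p q = ⟪G p, G q⟫) :
    kerB K f g = ⟪Finsupp.lift H ℝ α G f, Finsupp.lift H ℝ α G g⟫ := by
  rw [kerB_apply, Finsupp.lift_apply, Finsupp.lift_apply]
  simp only [Finsupp.sum]
  rw [sum_inner]
  refine Finset.sum_congr rfl fun p hp => ?_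
  rw [real_inner_smul_left, inner_sum, Finset.mul_sum]
  refine Finset.sum_congr rfl fun q hq => ?_
  rw [real_inner_smul_right, hK p hp q hq]

private lemma kerB_single {α : Type} (K : α → α → ℝ) (p q : α) :
    kerB K (Finsupp.single p 1) (Finsupp.single q 1) = K p q := by
  rw [kerB_apply]
  rw [Finsupp.sum_single_index (by simp), Finsupp.sum_single_index (by simp)]
  ring

private lemma lift_single {α H : Type} [AddCommGroup H] [Module ℝ H] (G : α → H) (p : α) :
    Finsupp.lift H ℝ α G (Finsupp.single p 1) = G p := by
  rw [Finsupp.lift_apply, Finsupp.sum_single_index (by simp), one_smul]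

/-- Normalized isometric parametrization of a Hilbert subset, based at `x`. -/
private lemma aux_g {X : Type} [MetricSpace X] (x : X) (Ai : Set X) (hx : x ∈ Ai)
    (h : IsHilbertSubset Ai) :
    ∃ (H : Type) (_ : NormedAddCommGroup H) (_ : InnerProductSpace ℝ H) (g : Ai → H),
      (∀ a b : Ai, ⟪g a, g b⟫ =
        (dist x (a : X) ^ 2 + dist x (b : X) ^ 2 - dist (a : X) (b : X) ^ 2) / 2) ∧
      Function.Surjective g := by
  obtain ⟨H, nG, iP, cS, f, hiso, hsurj⟩ := h
  refine ⟨H, nG, iP, fun a => f a - f ⟨x, hx⟩, ?_, ?_⟩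
  · intro a b
    have hab : ‖f a - f b‖ = dist (a : X) (b : X) := by
      rw [← dist_eq_norm, hiso.dist_eq, Subtype.dist_eq]
    have hax : ‖f a - f ⟨x, hx⟩‖ = dist x (a : X) := by
      rw [← dist_eq_norm, hiso.dist_eq, Subtype.dist_eq, dist_comm]
    have hbx : ‖f b - f ⟨x, hx⟩‖ = dist x (b : X) := by
      rw [← dist_eq_norm, hiso.dist_eq, Subtype.dist_eq, dist_comm]
    have hsub : (f a - f ⟨x, hx⟩) - (f b - f ⟨x, hx⟩) = f a - f b := by abel
    have key := norm_sub_sq_real (f a - f ⟨x, hx⟩) (f b - f ⟨x, hx⟩)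
    rw [hsub, hab, hax, hbx] at key
    linarith
  · intro u
    obtain ⟨a, ha⟩ := hsurj (u + f ⟨x, hx⟩)
    exact ⟨a, by show f a - f ⟨x, hx⟩ = u; rw [ha]; abel⟩

/-- If a dense-in-its-closure subset `U` admits an isometric embedding into a real Hilbert
space whose image is closed under addition and scalar multiplication, then the closure of `U`
is isometric to a real Hilbert space. -/
private lemma isHilbertSubset_closure_of_embedding {X : Type} [MetricSpace X] [CompleteSpace X]
    {U : Set X} (hU : U.Nonempty)
    {E : Type} [NormedAddCommGroup E] [InnerProductSpace ℝ E] [CompleteSpace E]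
    (Φ : U → E) (hΦ : Isometry Φ)
    (hadd : ∀ u v, ∃ w, Φ w = Φ u + Φ v)
    (hsmul : ∀ (c : ℝ) (u), ∃ w, Φ w = c • Φ u) :
    IsHilbertSubset (closure U) := by
  haveI : Nonempty U := hU.to_subtype
  let j : U → (closure U : Set X) := Set.inclusion subset_closure
  have hj : Isometry j := Isometry.of_dist_eq fun a b => by
    rw [Subtype.dist_eq, Subtype.dist_eq]
  have hjd : DenseRange j := by
    rw [Metric.denseRange_iff]
    rintro ⟨c, hc⟩ ε hε
    obtain ⟨u, hu, hd⟩ := Metric.mem_closure_iff.1 hc ε hε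
    exact ⟨⟨u, hu⟩, by rwa [Subtype.dist_eq]⟩
  haveI : CompleteSpace ↥(closure U) := isClosed_closure.completeSpace_coe
  have hui : IsUniformInducing j := hj.isUniformInducing
  have di : IsDenseInducing j := hui.isDenseInducing hjd
  set Ψ : ↥(closure U) → E := di.extend Φ with hΨdef
  have hΨuc : UniformContinuous Ψ :=
    uniformContinuous_uniformly_extend hui hjd hΦ.uniformContinuous
  have hΨc : Continuous Ψ := hΨuc.continuous
  have hΨj : ∀ u, Ψ (j u) = Φ u := fun u => di.extend_eq hΦ.continuous u
  have hΨ : Isometry Ψ := by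
    refine Isometry.of_dist_eq fun a b => ?_
    have hfun : (fun pr : ↥(closure U) × ↥(closure U) =>
        dist (Ψ pr.1) (Ψ pr.2)) = fun pr => dist pr.1 pr.2 := by
      refine Continuous.ext_on (hjd.prodMap hjd) ?_ ?_ ?_
      · exact (hΨc.comp continuous_fst).dist (hΨc.comp continuous_snd)
      · exact continuous_dist
      · rintro _ ⟨⟨u, v⟩, rfl⟩
        simp only [Prod.map_apply]
        rw [hΨj, hΨj, hΦ.dist_eq, ← hj.dist_eq]
    exact congrFun hfun (a, b)
  obtain ⟨z, hz⟩ := hsmul 0 (Classical.arbitrary U)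
  let S : Submodule ℝ E :=
    { carrier := Set.range Φ
      add_mem' := by
        rintro _ _ ⟨u, rfl⟩ ⟨v, rfl⟩
        obtain ⟨w, hw⟩ := hadd u v
        exact ⟨w, hw⟩
      zero_mem' := ⟨z, by rw [hz, zero_smul]⟩
      smul_mem' := by
        rintro c _ ⟨u, rfl⟩
        obtain ⟨w, hw⟩ := hsmul c u
        exact ⟨w, hw⟩ }
  let T := S.topologicalClosure
  haveI : CompleteSpace T := IsClosed.completeSpace_coe (hs := S.isClosed_topologicalClosure)
  have hTcoe : (T : Set E) = closure (Set.range Φ) := rfl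
  have hrange_sub : Set.range Ψ ⊆ (T : Set E) := by
    have h1 : Set.range Ψ = Ψ '' Set.univ := Set.image_univ.symm
    have h2 : (Set.univ : Set ↥(closure U)) = closure (Set.range j) :=
      hjd.closure_range.symm
    rw [h1, h2, hTcoe]
    refine (image_closure_subset_closure_image hΨc).trans (closure_mono ?_)
    rintro _ ⟨_, ⟨u, rfl⟩, rfl⟩
    exact ⟨u, (hΨj u).symm⟩
  have hclosed : IsClosed (Set.range Ψ) := hΨ.isUniformInducing.isComplete_range.isClosed
  have hsup : (T : Set E) ⊆ Set.range Ψ := by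
    rw [hTcoe]
    refine closure_minimal ?_ hclosed
    rintro _ ⟨u, rfl⟩
    exact ⟨j u, hΨj u⟩
  refine ⟨↥T, inferInstance, inferInstance, inferInstance,
    fun c => ⟨Ψ c, hrange_sub ⟨c, rfl⟩⟩, ?_, ?_⟩
  · refine Isometry.of_dist_eq fun a b => ?_
    rw [Subtype.dist_eq]
    exact hΨ.dist_eq a b
  · rintro ⟨e, he⟩
    obtain ⟨c, hc⟩ := hsup he
    exact ⟨c, Subtype.ext hc⟩

/-- The union of a chain of Hilbert subsets through a common point embeds isometrically
into a real Hilbert space, with image closed under addition and scalar multiplication. -/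
private lemma chain_kernel {X : Type} [MetricSpace X] (x : X) {ι : Type} [Nonempty ι]
    (A : ι → Set X) (hx : ∀ i, x ∈ A i) (hHilb : ∀ i, IsHilbertSubset (A i))
    (hchain : ∀ i j, A i ⊆ A j ∨ A j ⊆ A i) :
    ∃ (E : Type) (_ : NormedAddCommGroup E) (_ : InnerProductSpace ℝ E) (_ : CompleteSpace E)
      (Φ : ↥(⋃ i, A i) → E), Isometry Φ ∧
        (∀ u v, ∃ w, Φ w = Φ u + Φ v) ∧ (∀ (c : ℝ) (u), ∃ w, Φ w = c • Φ u) := by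
  classical
  choose H nG iP g hg hgsurj using fun i => aux_g x (A i) (hx i) (hHilb i)
  set U : Set X := ⋃ i, A i with hUdef
  have hdir : Directed (· ⊆ ·) A := fun i j => (hchain i j).elim
    (fun h => ⟨j, h, subset_rfl⟩) (fun h => ⟨i, subset_rfl, h⟩)
  have hcommon : ∀ s : Finset ↥U, ∃ i, ∀ p ∈ s, (p : X) ∈ A i := by
    intro s
    obtain ⟨i, hi⟩ := hdir.exists_mem_subset_of_finset_subset_biUnion
      (s := s.image Subtype.val) (by
        intro p hp
        simp only [Finset.coe_image, Set.mem_image] at hp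
        obtain ⟨q, _, rfl⟩ := hp
        exact q.2)
    exact ⟨i, fun p hp => hi (Finset.mem_image_of_mem _ hp)⟩
  -- the kernel
  set K : ↥U → ↥U → ℝ :=
    fun p q => (dist x (p : X) ^ 2 + dist x (q : X) ^ 2 - dist (p : X) (q : X) ^ 2) / 2
    with hKdef
  set B := kerB K with hBdef
  -- local realizations
  let G : ∀ i, ↥U → H i := fun i p =>
    if h : (p : X) ∈ A i then g i ⟨p, h⟩ else g i ⟨x, hx i⟩
  have hGdef : ∀ i (p : ↥U) (h : (p : X) ∈ A i), G i p = g i ⟨p, h⟩ := fun i p h => dif_pos h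
  have hGK : ∀ i (p q : ↥U), (p : X) ∈ A i → (q : X) ∈ A i →
      K p q = (letI := nG i; letI := iP i; (inner ℝ (G i p) (G i q) : ℝ)) := by
    intro i p q hp hq
    letI := nG i; letI := iP i
    rw [hGdef i p hp, hGdef i q hq, hg i ⟨p, hp⟩ ⟨q, hq⟩]
  -- positivity
  have hBpos : ∀ f, 0 ≤ B f f := by
    intro f
    obtain ⟨i, hi⟩ := hcommon f.support
    letI := nG i; letI := iP i
    rw [hBdef, kerB_eq_inner K (G i) f f
      (fun p hp q hq => hGK i p q (hi p hp) (hi q hq))]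
    exact real_inner_self_nonneg
  have hBsymm : ∀ f f', B f f' = B f' f := by
    refine fun f f' => kerB_symm K (fun p q => ?_) f f'
    rw [hKdef]
    simp only
    rw [dist_comm (p : X) (q : X)]
    ring
  -- the pre-inner-product space structure
  set V := ↥U →₀ ℝ with hVdef
  let C : PreInnerProductSpace.Core ℝ V :=
    { inner := fun f f' => B f f'
      conj_inner_symm := fun f f' => by
        simp only [starRingEnd_apply, star_trivial]
        exact hBsymm f' f
      re_inner_nonneg := fun f => by simpa using hBpos f
      add_left := fun f₁ f₂ f₃ => by simp [map_add]
      smul_left := fun f₁ f₂ r => by simp [map_smul] }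
  letI : PreInnerProductSpace.Core ℝ V := C
  letI : Inner ℝ V := C.toInner
  letI : SeminormedAddCommGroup V := InnerProductSpace.Core.toSeminormedAddCommGroup (𝕜 := ℝ) (F := V)
  letI : NormedSpace ℝ V := InnerProductSpace.Core.toNormedSpace (𝕜 := ℝ) (F := V)
  letI : InnerProductSpace ℝ V :=
    { C with
      norm_sq_eq_re_inner := fun f => by
        have h₁ : ‖f‖ ^ 2 = Real.sqrt (RCLike.re (C.inner f f)) ^ 2 := rfl
        have h₂ : 0 ≤ RCLike.re (C.inner f f) := C.re_inner_nonneg f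
        rw [h₁]
        exact Real.sq_sqrt (by simpa using h₂) }
  have hinner : ∀ f f' : V, (inner ℝ f f' : ℝ) = B f f' := fun f f' => rfl
  have hnorm : ∀ f : V, ‖f‖ ^ 2 = B f f := by
    intro f
    rw [← hinner]
    exact (real_inner_self_eq_norm_sq f).symm
  -- the ambient Hilbert space
  set E := UniformSpace.Completion V with hEdef
  set Φ : ↥U → E := fun p => ((Finsupp.single p (1 : ℝ) : V) : E) with hΦdef
  -- a vanishing norm criterion
  have hvanish : ∀ (i : ι) (f : V), (∀ p ∈ f.support, (p : X) ∈ A i) →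
      (letI := nG i; letI := iP i;
        Finsupp.lift (H i) ℝ ↥U (G i) f = 0) → ((f : E) = 0) := by
    intro i f hsupp hlift
    letI := nG i; letI := iP i
    have hBff : B f f = 0 := by
      rw [hBdef, kerB_eq_inner K (G i) f f
        (fun p hp q hq => hGK i p q (hsupp p hp) (hsupp q hq)), hlift]
      simp
    have hnf : ‖f‖ = 0 := by
      have := hnorm f
      rw [hBff, pow_eq_zero_iff (two_ne_zero)] at this
      exact this
    have : ‖(f : E)‖ = 0 := by rwa [UniformSpace.Completion.norm_coe]
    exact norm_eq_zero.1 this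
  -- single-element computations
  have hsingle : ∀ p q : ↥U, B (Finsupp.single p 1) (Finsupp.single q 1) = K p q :=
    fun p q => kerB_single K p q
  -- distance identity
  have hdist : ∀ p q : ↥U, dist (Φ p) (Φ q) = dist p q := by
    intro p q
    have hcoe : Φ p - Φ q = ((Finsupp.single p 1 - Finsupp.single q 1 : V) : E) := by
      rw [hΦdef]
      simp only
      rw [UniformSpace.Completion.coe_sub]
    have hsq : ‖(Finsupp.single p 1 - Finsupp.single q 1 : V)‖ ^ 2 = dist p q ^ 2 := by
      rw [hnorm]
      have hexp : B (Finsupp.single p 1 - Finsupp.single q 1)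
          (Finsupp.single p 1 - Finsupp.single q 1)
          = K p p - K q p - (K p q - K q q) := by
        simp only [map_sub, LinearMap.sub_apply, hsingle]
      rw [hexp, Subtype.dist_eq, hKdef]
      simp only
      rw [dist_self, dist_self, dist_comm (q : X) (p : X)]
      ring
    rw [dist_eq_norm, hcoe, UniformSpace.Completion.norm_coe]
    exact eq_of_sq_eq_sq' (norm_nonneg _) dist_nonneg hsq
  -- support bound for triple combinations
  have hmemU : ∀ i (r : ↥(A i)), (r : X) ∈ U := by
    intro i r
    rw [hUdef]
    exact Set.mem_iUnion.2 ⟨i, r.2⟩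
  refine ⟨E, inferInstance, inferInstance, inferInstance, Φ, Isometry.of_dist_eq hdist, ?_, ?_⟩
  · -- addition
    intro u v
    obtain ⟨i, hi⟩ := hcommon {u, v}
    have hu : (u : X) ∈ A i := hi u (by simp)
    have hv : (v : X) ∈ A i := hi v (by simp)
    letI := nG i; letI := iP i
    obtain ⟨r, hr⟩ := hgsurj i (g i ⟨u, hu⟩ + g i ⟨v, hv⟩)
    set w : ↥U := ⟨r, hmemU i r⟩ with hwdef
    have hwA : (w : X) ∈ A i := r.2
    refine ⟨w, ?_⟩
    set z : V := Finsupp.single w 1 - Finsupp.single u 1 - Finsupp.single v 1 with hzdef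
    have hzsupp : ∀ p ∈ z.support, (p : X) ∈ A i := by
      intro p hp
      have hcase : p = w ∨ p = u ∨ p = v := by
        rcases Finset.mem_union.1 (Finsupp.support_sub hp) with h2 | h2
        · rcases Finset.mem_union.1 (Finsupp.support_sub h2) with h4 | h4
          · exact Or.inl (Finset.mem_singleton.1 (Finsupp.support_single_subset h4))
          · exact Or.inr (Or.inl (Finset.mem_singleton.1 (Finsupp.support_single_subset h4)))
        · exact Or.inr (Or.inr (Finset.mem_singleton.1 (Finsupp.support_single_subset h2)))
      rcases hcase with rfl | rfl | rfl
      · exact hwA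
      · exact hu
      · exact hv
    have hzlift : Finsupp.lift (H i) ℝ ↥U (G i) z = 0 := by
      rw [hzdef]
      simp only [map_sub, lift_single]
      rw [hGdef i w hwA, hGdef i u hu, hGdef i v hv]
      have : (⟨(w : X), hwA⟩ : ↥(A i)) = r := Subtype.ext rfl
      rw [this, hr]
      abel
    have hz0 : ((z : V) : E) = 0 := hvanish i z hzsupp hzlift
    have hcoe : ((z : V) : E) = Φ w - Φ u - Φ v := by
      rw [hzdef]
      push_cast [UniformSpace.Completion.coe_sub]
      rfl
    rw [hcoe] at hz0
    have := sub_eq_zero.1 hz0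
    rw [sub_eq_iff_eq_add] at this
    rw [this]
    abel
  · -- scalar multiplication
    intro c u
    obtain ⟨i, hi⟩ := hcommon {u}
    have hu : (u : X) ∈ A i := hi u (by simp)
    letI := nG i; letI := iP i
    obtain ⟨r, hr⟩ := hgsurj i (c • g i ⟨u, hu⟩)
    set w : ↥U := ⟨r, hmemU i r⟩ with hwdef
    have hwA : (w : X) ∈ A i := r.2
    refine ⟨w, ?_⟩
    set z : V := Finsupp.single w 1 - c • Finsupp.single u 1 with hzdef
    have hzsupp : ∀ p ∈ z.support, (p : X) ∈ A i := by
      intro p hp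
      have hcase : p = w ∨ p = u := by
        rcases Finset.mem_union.1 (Finsupp.support_sub hp) with h2 | h2
        · exact Or.inl (Finset.mem_singleton.1 (Finsupp.support_single_subset h2))
        · exact Or.inr (Finset.mem_singleton.1
            (Finsupp.support_single_subset (Finsupp.support_smul h2)))
      rcases hcase with rfl | rfl
      · exact hwA
      · exact hu
    have hzlift : Finsupp.lift (H i) ℝ ↥U (G i) z = 0 := by
      rw [hzdef]
      simp only [map_sub, map_smul, lift_single]
      rw [hGdef i w hwA, hGdef i u hu]
      have : (⟨(w : X), hwA⟩ : ↥(A i)) = r := Subtype.ext rfl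
      rw [this, hr]
      abel
    have hz0 : ((z : V) : E) = 0 := hvanish i z hzsupp hzlift
    have hcoe : ((z : V) : E) = Φ w - c • Φ u := by
      rw [hzdef]
      rw [UniformSpace.Completion.coe_sub, UniformSpace.Completion.coe_smul]
    rw [hcoe] at hz0
    exact sub_eq_zero.1 hz0

/-- the closure of the union of a chain of Hilbert factor subsets
through `x` is isometric to a Hilbert space. -/
theorem closure_chain_union_isHilbert {X : Type} [MetricSpace X] [CompleteSpace X]
    (x : X) {ι : Type} [Nonempty ι] (A : ι → Set X)
    (hfac : ∀ i, IsFactorSubset (A i) x) (hHilb : ∀ i, IsHilbertSubset (A i))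
    (hchain : ∀ i j, A i ⊆ A j ∨ A j ⊆ A i) :
    IsHilbertSubset (closure (⋃ i, A i)) := by
  have hx : ∀ i, x ∈ A i := fun i => (hfac i).1
  obtain ⟨E, _, _, _, Φ, hΦ, hadd, hsmul⟩ := chain_kernel x A hx hHilb hchain
  exact isHilbertSubset_closure_of_embedding
    ⟨x, Set.mem_iUnion.2 ⟨Classical.arbitrary ι, hx _⟩⟩ Φ hΦ hadd hsmul

end
end

section
/- Let X be a complete metric space, x ∈ X, and let (A_α) be a chain of factor subsets through x ordered by inclusion, with nearest-point projections π_α = π_{A_α}. Then for each p ∈ X the net (π_α(p)) is Cauchy: whenever A_α ⊂ A_β one has π_α(π_β(p)) = π_α(p) and d(p, π_β(p))² + d(π_α(p), π_β(p))² = d(p, π_α(p))², so the numbers d(p, π_α(p)) decrease and the points π_α(p) converge to the nearest point of p on the closure H of ⋃_α A_α. -/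
lemma factor_pythagoras {X : Type} [MetricSpace X] {A : Set X} {x : X}
    (hA : IsFactorSubset A x) {π : X → X} (hπ : IsNearestPointProj A π) :
    ∀ p : X, ∀ a ∈ A, dist p a ^ 2 = dist p (π p) ^ 2 + dist (π p) a ^ 2 := by
  obtain ⟨hx, Y, Z, _, _, Φ, ⟨hbij, hdist⟩, hAeq⟩ := hA
  intro p a ha
  obtain ⟨q, hq⟩ := hbij.2 ((Φ p).1, (Φ x).2)
  have hq1 : (Φ q).1 = (Φ p).1 := by rw [hq]
  have hq2 : (Φ q).2 = (Φ x).2 := by rw [hq]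
  have hqA : q ∈ A := by rw [hAeq]; exact hq2
  have hdpq : dist p q ^ 2 = dist (Φ p).2 (Φ x).2 ^ 2 := by
    have := hdist p q
    rw [hq1, hq2] at this
    simpa using this
  have hmin : ∀ b ∈ A, dist p q ≤ dist p b := by
    intro b hb
    have hb2 : (Φ b).2 = (Φ x).2 := by rw [hAeq] at hb; exact hb
    have h := hdist p b
    rw [hb2] at h
    nlinarith [dist_nonneg (x := p) (y := q), dist_nonneg (x := p) (y := b),
      sq_nonneg (dist (Φ p).1 (Φ b).1)]
  have heq : dist p q = dist p (π p) :=
    le_antisymm (hmin _ (hπ p).1) ((hπ p).2.1 q hqA)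
  have hqπ : q = π p := (hπ p).2.2 q hqA heq
  have hΦπ : Φ (π p) = ((Φ p).1, (Φ x).2) := by rw [← hqπ, hq]
  have ha2 : (Φ a).2 = (Φ x).2 := by rw [hAeq] at ha; exact ha
  have h1 := hdist p a
  have h2 := hdist p (π p)
  have h3 := hdist (π p) a
  rw [hΦπ] at h2 h3
  simp only [ha2] at h1 h3 ⊢
  simp at h2 h3
  rw [h2, h3]; linarith


/-- along a chain of Hilbert factor subsets through `x`, the
nearest-point projections of any point `p` satisfy the Pythagorean compatibility
relations, form a Cauchy net, and converge to the nearest point of `p` on the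
closure `H` of the union. -/
theorem chain_projections_converge {X : Type} [MetricSpace X] [CompleteSpace X]
    (x : X) {ι : Type} [Nonempty ι] (A : ι → Set X)
    (hfac : ∀ i, IsFactorSubset (A i) x) (hHilb : ∀ i, IsHilbertSubset (A i))
    (hchain : ∀ i j, A i ⊆ A j ∨ A j ⊆ A i)
    (π : ι → X → X) (hπ : ∀ i, IsNearestPointProj (A i) (π i)) (p : X) :
    (∀ i j, A i ⊆ A j → π i (π j p) = π i p ∧
        dist p (π j p) ^ 2 + dist (π i p) (π j p) ^ 2 = dist p (π i p) ^ 2) ∧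
    (∀ i j, A i ⊆ A j → dist p (π j p) ≤ dist p (π i p)) ∧
    (∀ ε > (0 : ℝ), ∃ i, ∀ j k, A i ⊆ A j → A i ⊆ A k →
        dist (π j p) (π k p) < ε) ∧
    ∃ m ∈ closure (⋃ i, A i),
      (∀ a ∈ closure (⋃ i, A i), dist p m ≤ dist p a) ∧
      ∀ ε > (0 : ℝ), ∃ i, ∀ j, A i ⊆ A j → dist (π j p) m < ε := by
  classical
  have key : ∀ i, ∀ q : X, ∀ a ∈ A i, dist q a ^ 2 = dist q (π i q) ^ 2 + dist (π i q) a ^ 2 :=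
    fun i => factor_pythagoras (hfac i) (hπ i)
  have hmem : ∀ i (q : X), π i q ∈ A i := fun i q => (hπ i q).1
  -- Part 1
  have part1 : ∀ i j, A i ⊆ A j → π i (π j p) = π i p ∧
      dist p (π j p) ^ 2 + dist (π i p) (π j p) ^ 2 = dist p (π i p) ^ 2 := by
    intro i j hij
    set q := π j p with hqdef
    set r := π i q with hrdef
    have hrA : r ∈ A i := hmem i q
    have hcomb : ∀ a ∈ A i, dist p a ^ 2 = (dist p q ^ 2 + dist q r ^ 2) + dist r a ^ 2 := by
      intro a ha
      have h1 := key j p a (hij ha)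
      have h2 := key i q a ha
      linarith
    have hpr : dist p r ^ 2 = dist p q ^ 2 + dist q r ^ 2 := by
      have := hcomb r hrA
      simp at this
      linarith
    have hminr : ∀ a ∈ A i, dist p r ≤ dist p a := by
      intro a ha
      have h := hcomb a ha
      nlinarith [dist_nonneg (x := p) (y := r), dist_nonneg (x := p) (y := a),
        sq_nonneg (dist r a)]
    have heq : dist p r = dist p (π i p) :=
      le_antisymm (hminr _ (hπ i p).1) ((hπ i p).2.1 r hrA)
    have hreq : r = π i p := (hπ i p).2.2 r hrA heq
    refine ⟨hreq, ?_⟩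
    have := key j p (π i p) (hij (hmem i p))
    rw [dist_comm (π i p) (π j p)]
    linarith
  have part2 : ∀ i j, A i ⊆ A j → dist p (π j p) ≤ dist p (π i p) := by
    intro i j hij
    have h := (part1 i j hij).2
    nlinarith [dist_nonneg (x := p) (y := π j p), dist_nonneg (x := p) (y := π i p),
      sq_nonneg (dist (π i p) (π j p))]
  -- the infimum of squared distances
  set d : ι → ℝ := fun i => dist p (π i p) with hd
  set S : Set ℝ := Set.range (fun i => d i ^ 2) with hS
  have hSne : S.Nonempty := Set.range_nonempty _
  have hSbd : BddBelow S := ⟨0, by rintro _ ⟨i, rfl⟩; positivity⟩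
  set E : ℝ := sInf S with hE
  have hEle : ∀ i, E ≤ d i ^ 2 := fun i => csInf_le hSbd ⟨i, rfl⟩
  have hEpos : 0 ≤ E := le_csInf hSne (by rintro _ ⟨i, rfl⟩; positivity)
  have hgap : ∀ i j, A i ⊆ A j → dist (π i p) (π j p) ^ 2 = d i ^ 2 - d j ^ 2 := by
    intro i j hij
    have := (part1 i j hij).2
    simp only [hd]
    linarith
  -- selection : for every ε > 0 an index with d i ^ 2 < E + ε ^ 2
  have hsel : ∀ ε : ℝ, 0 < ε → ∃ i, d i ^ 2 < E + ε ^ 2 := by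
    intro ε hε
    have : sInf S < E + ε ^ 2 := by rw [← hE]; nlinarith
    obtain ⟨_, ⟨i, rfl⟩, hlt⟩ := exists_lt_of_csInf_lt hSne this
    exact ⟨i, hlt⟩
  have hclose : ∀ (ε : ℝ) (i : ι), 0 < ε → d i ^ 2 < E + ε ^ 2 →
      ∀ j k, A i ⊆ A j → A i ⊆ A k → dist (π j p) (π k p) < ε := by
    intro ε i hε hi j k hj hk
    rcases hchain j k with hjk | hkj
    · have h := hgap j k hjk
      have hdj : d j ≤ d i := part2 i j hj
      have hE' := hEle k
      have hdji : d j ^ 2 ≤ d i ^ 2 := by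
        have := dist_nonneg (x := p) (y := π j p)
        nlinarith [dist_nonneg (x := p) (y := π i p)]
      nlinarith [dist_nonneg (x := π j p) (y := π k p)]
    · have h := hgap k j hkj
      have hdk : d k ≤ d i := part2 i k hk
      have hdki : d k ^ 2 ≤ d i ^ 2 := by
        nlinarith [dist_nonneg (x := p) (y := π k p), dist_nonneg (x := p) (y := π i p)]
      have hE' := hEle j
      rw [dist_comm (π j p) (π k p)]
      nlinarith [dist_nonneg (x := π k p) (y := π j p)]
  have part3 : ∀ ε > (0 : ℝ), ∃ i, ∀ j k, A i ⊆ A j → A i ⊆ A k →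
      dist (π j p) (π k p) < ε := by
    intro ε hε
    obtain ⟨i, hi⟩ := hsel ε hε
    exact ⟨i, hclose ε i hε hi⟩
  refine ⟨part1, part2, part3, ?_⟩
  -- build an increasing sequence
  have hsel' : ∀ n : ℕ, ∃ i, d i ^ 2 < E + (1 / (n + 1 : ℝ)) ^ 2 := by
    intro n
    exact hsel _ (by positivity)
  choose g hg using hsel'
  let k : ℕ → ι := fun n => Nat.rec (g 0)
    (fun n kn => if A kn ⊆ A (g (n + 1)) then g (n + 1) else kn) n
  have hk2 : ∀ n, A (k n) ⊆ A (k (n + 1)) := by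
    intro n
    show A (k n) ⊆ A (if A (k n) ⊆ A (g (n + 1)) then g (n + 1) else k n)
    split
    · assumption
    · exact subset_rfl
  have hk1 : ∀ n, A (g n) ⊆ A (k n) := by
    intro n
    cases n with
    | zero => exact subset_rfl
    | succ n =>
      show A (g (n + 1)) ⊆ A (if A (k n) ⊆ A (g (n + 1)) then g (n + 1) else k n)
      split
      · exact subset_rfl
      · next h => rcases hchain (k n) (g (n + 1)) with h' | h'
                  · exact absurd h' h
                  · exact h'
  have hkmono : ∀ n m, n ≤ m → A (k n) ⊆ A (k m) := by
    intro n m hnm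
    induction hnm with
    | refl => exact subset_rfl
    | step h ih => exact fun y hy => hk2 _ (ih hy)
  have hkbound : ∀ n, d (k n) ^ 2 < E + (1 / (n + 1 : ℝ)) ^ 2 := by
    intro n
    have h := part2 (g n) (k n) (hk1 n)
    have := hg n
    nlinarith [dist_nonneg (x := p) (y := π (k n) p), dist_nonneg (x := p) (y := π (g n) p)]
  set q : ℕ → X := fun n => π (k n) p with hq
  have hcau : ∀ n m, n ≤ m → dist (q n) (q m) < 1 / (n + 1 : ℝ) := by
    intro n m hnm
    have h := hgap (k n) (k m) (hkmono n m hnm)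
    have h1 := hkbound n
    have h2 := hEle (k m)
    have : 0 < 1 / (n + 1 : ℝ) := by positivity
    nlinarith [dist_nonneg (x := q n) (y := q m)]
  have hCauchy : CauchySeq q := by
    rw [Metric.cauchySeq_iff']
    intro ε hε
    obtain ⟨N, hN⟩ := exists_nat_one_div_lt hε
    refine ⟨N, fun n hn => ?_⟩
    calc dist (q n) (q N) = dist (q N) (q n) := dist_comm _ _
      _ < 1 / (N + 1 : ℝ) := hcau N n hn
      _ < ε := hN
  obtain ⟨m, hm⟩ := cauchySeq_tendsto_of_complete hCauchy
  have hmcl : m ∈ closure (⋃ i, A i) :=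
    mem_closure_of_tendsto hm (Filter.Eventually.of_forall fun n =>
      Set.mem_iUnion.2 ⟨k n, hmem _ p⟩)
  -- dist p m ^ 2 ≤ E
  have hdistlim : Filter.Tendsto (fun n => dist p (q n)) Filter.atTop (nhds (dist p m)) :=
    (Continuous.dist continuous_const continuous_id).continuousAt.tendsto.comp hm
  have htendE : Filter.Tendsto (fun n : ℕ => E + (1 / (n + 1 : ℝ)) ^ 2) Filter.atTop
      (nhds E) := by
    have h0 : Filter.Tendsto (fun n : ℕ => (1 / (n + 1 : ℝ))) Filter.atTop (nhds 0) :=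
      tendsto_one_div_add_atTop_nhds_zero_nat
    have := (tendsto_const_nhds (x := E) (f := Filter.atTop (α := ℕ))).add
      ((h0.pow 2))
    simpa using this
  have hpm2 : dist p m ^ 2 ≤ E := by
    have h1 : Filter.Tendsto (fun n => dist p (q n) ^ 2) Filter.atTop
        (nhds (dist p m ^ 2)) := hdistlim.pow 2
    have := le_of_tendsto_of_tendsto' h1 htendE (fun n => le_of_lt (hkbound n))
    linarith
  have hmin : ∀ a ∈ closure (⋃ i, A i), dist p m ≤ dist p a := by
    have hsub : (⋃ i, A i) ⊆ {a | dist p m ≤ dist p a} := by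
      rintro a ha
      obtain ⟨_, ⟨i, rfl⟩, hai⟩ := ha
      have h1 : d i ≤ dist p a := (hπ i p).2.1 a hai
      have h2 := hEle i
      have h3 : 0 ≤ d i := dist_nonneg
      have h4 : dist p m ^ 2 ≤ dist p a ^ 2 := by nlinarith
      exact (pow_le_pow_iff_left₀ dist_nonneg dist_nonneg two_ne_zero).mp h4
    have hcl : IsClosed {a : X | dist p m ≤ dist p a} :=
      isClosed_le continuous_const (Continuous.dist continuous_const continuous_id)
    exact fun a ha => closure_minimal hsub hcl ha
  refine ⟨m, hmcl, hmin, ?_⟩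
  intro ε hε
  obtain ⟨N, hN⟩ := exists_nat_one_div_lt (half_pos hε)
  refine ⟨k N, fun j hj => ?_⟩
  -- dist (q N) m ≤ 1/(N+1)
  have hqNm : dist (q N) m ≤ 1 / (N + 1 : ℝ) := by
    have h1 : Filter.Tendsto (fun n => dist (q N) (q n)) Filter.atTop (nhds (dist (q N) m)) :=
      (Continuous.dist continuous_const continuous_id).continuousAt.tendsto.comp hm
    refine le_of_tendsto h1 ?_
    filter_upwards [Filter.eventually_ge_atTop N] with n hn
    exact le_of_lt (hcau N n hn)
  have hjq : dist (π j p) (q N) < 1 / (N + 1 : ℝ) := by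
    have h := hgap (k N) j hj
    have h1 := hkbound N
    have h2 := hEle j
    have hp : 0 < 1 / (N + 1 : ℝ) := by positivity
    rw [dist_comm]
    nlinarith [dist_nonneg (x := π (k N) p) (y := π j p)]
  calc dist (π j p) m ≤ dist (π j p) (q N) + dist (q N) m := dist_triangle _ _ _
    _ < 1 / (N + 1 : ℝ) + 1 / (N + 1 : ℝ) := by linarith
    _ < ε / 2 + ε / 2 := by linarith
    _ = ε := by ring
end

section
/- (Projection of a splitting line onto a factor) Let X be a metric space, x ∈ X, Y a factor subset of X through x, and ℓ a splitting line of X through x. Then π_Y(ℓ) is either a single point or a splitting line in Y. -/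
lemma le_of_sq_le_sq' {a b : ℝ} (h : a^2 ≤ b^2) (hb : 0 ≤ b) : a ≤ b := by
  nlinarith [sq_nonneg (a - b), sq_nonneg (a + b)]

lemma quad_lead_nonneg {A B C : ℝ} (h : ∀ t : ℝ, 0 ≤ A * t^2 + B * t + C) : 0 ≤ A := by
  by_contra hA
  push_neg at hA
  have hA' : 0 < -A := by linarith
  set t := max 1 ((|B| + |C| + 1) / (-A)) with ht
  have ht1 : (1:ℝ) ≤ t := le_max_left _ _
  have ht0 : (0:ℝ) < t := by linarith
  have ht2 : (|B| + |C| + 1) / (-A) ≤ t := le_max_right _ _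
  have hAt : A * t ≤ -(|B| + |C| + 1) := by
    rw [div_le_iff₀ hA'] at ht2
    nlinarith
  have h1 := h t
  have hB : B * t ≤ |B| * t := by nlinarith [le_abs_self B]
  have hC : C ≤ |C| * t := by nlinarith [le_abs_self C, abs_nonneg C]
  nlinarith [abs_nonneg B, abs_nonneg C]

lemma four_point_sq {Xv Yv d : ℝ} (hX : 0 ≤ Xv) (hY : 0 ≤ Yv) (hd : 0 ≤ d)
    (h1 : d ≤ Xv + Yv) (h2 : Xv ≤ d + Yv) (h3 : Yv ≤ d + Xv) :
    (Xv^2 + Yv^2 - d^2)^2 ≤ 4 * Xv^2 * Yv^2 := by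
  have hp : 0 ≤ (Xv + Yv - d) * ((d + Yv - Xv) * ((d + Xv - Yv) * (Xv + Yv + d))) := by
    apply mul_nonneg (by linarith)
    apply mul_nonneg (by linarith)
    apply mul_nonneg (by linarith)
    linarith
  nlinarith [hp]

lemma minkowski_forced {a1 b1 a2 b2 a3 b3 α β : ℝ}
    (ha1 : 0 ≤ a1) (hb1 : 0 ≤ b1) (ha2 : 0 ≤ a2) (hb2 : 0 ≤ b2)
    (ha3 : 0 ≤ a3) (hb3 : 0 ≤ b3) (hα : 0 < α) (hβ : 0 < β)
    (e1 : a1^2 + b1^2 = α^2) (e2 : a2^2 + b2^2 = β^2) (e3 : a3^2 + b3^2 = (α+β)^2)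
    (t1 : a3 ≤ a1 + a2) (t2 : b3 ≤ b1 + b2) :
    a1 * β = a2 * α ∧ a3 = a1 + a2 := by
  have hge : α*β ≤ a1*a2 + b1*b2 := by
    nlinarith [sq_nonneg (a3 - (a1+a2)), sq_nonneg (b3 - (b1+b2))]
  have hsq : (a1*a2 + b1*b2)^2 ≤ (α*β)^2 := by nlinarith [sq_nonneg (a1*b2 - a2*b1)]
  have hcs : a1*a2 + b1*b2 ≤ α*β :=
    le_of_sq_le_sq' hsq (le_of_lt (mul_pos hα hβ))
  have heq : a1*a2 + b1*b2 = α*β := le_antisymm hcs hge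
  have hz : a1*b2 = a2*b1 := by
    have h0 : (a1*b2 - a2*b1)^2 = 0 := by nlinarith [sq_nonneg (a1*b2 - a2*b1)]
    have := sq_eq_zero_iff.mp h0
    linarith
  have hsum : a3^2 + b3^2 = (a1+a2)^2 + (b1+b2)^2 := by
    linear_combination e3 - e1 - e2 - 2*heq
  have h1 : a3^2 ≤ (a1+a2)^2 := by nlinarith
  have h2 : b3^2 ≤ (b1+b2)^2 := by nlinarith
  have h1eq : a3^2 = (a1+a2)^2 := by linarith
  constructor
  · have key : α * (a2*α - a1*β) = 0 := by linear_combination (-a2)*e1 + a1*heq + (-b1)*hz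
    rcases mul_eq_zero.mp key with h | h
    · linarith
    · linarith
  · have h4 : (a3 - (a1+a2)) * (a3 + (a1+a2)) = 0 := by linear_combination h1eq
    rcases mul_eq_zero.mp h4 with h | h
    · linarith
    · linarith

set_option maxHeartbeats 4000000

/-- the projection of a splitting line through `x` onto a factor
subset `Y` through `x` is either a point or a splitting line in `Y`. -/
theorem splitting_line_projects {X : Type} [MetricSpace X] (x : X)
    (Y : Set X) (hY : IsFactorSubset Y x)
    (πY : X → X) (hπY : IsNearestPointProj Y πY)
    (ℓ : Set X) (hℓ : IsSplittingLine ℓ) (hxℓ : x ∈ ℓ) :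
    (∃ y : X, πY '' ℓ = {y}) ∨
    IsSplittingLine ((fun p : X => (⟨πY p, (hπY p).1⟩ : Y)) '' ℓ) := by
  obtain ⟨hxY, Y₀, Z, instY₀, instZ, Φ, hΦ, hYeq⟩ := hY
  subst hYeq
  obtain ⟨-, W, instW, Ψ, w₀, hΨ, hΨl⟩ := hℓ
  have hΦd := hΦ.2
  have hΨd := hΨ.2
  set eΦ := Equiv.ofBijective Φ hΦ.1 with heΦ
  set eΨ := Equiv.ofBijective Ψ hΨ.1 with heΨ
  have hΦe : ∀ v, Φ (eΦ.symm v) = v := fun v => eΦ.apply_symm_apply v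
  have hΨe : ∀ v, Ψ (eΨ.symm v) = v := fun v => eΨ.apply_symm_apply v
  have hw0 : (Ψ x).2 = w₀ := by
    have hmem : Ψ x ∈ Ψ '' ℓ := ⟨x, hxℓ, rfl⟩
    rw [hΨl] at hmem
    exact hmem.2
  -- the line parametrization
  set γ : ℝ → X := fun t => eΨ.symm ((Ψ x).1 + t, w₀) with hγdef
  have hΨγ : ∀ t, Ψ (γ t) = ((Ψ x).1 + t, w₀) := fun t => hΨe _
  have hγ0 : γ 0 = x := by
    apply eΨ.injective
    show Ψ _ = Ψ _
    rw [hΨγ]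
    rw [Prod.ext_iff]
    exact ⟨by simp, by simp [hw0]⟩
  have hγrange : Set.range γ = ℓ := by
    apply Set.eq_of_subset_of_subset
    · rintro p ⟨t, rfl⟩
      have : Ψ (γ t) ∈ Ψ '' ℓ := by
        rw [hΨl]
        exact ⟨Set.mem_univ _, by rw [hΨγ]; exact rfl⟩
      obtain ⟨q, hq, hqe⟩ := this
      have : q = γ t := hΨ.1.1 hqe
      rwa [← this]
    · intro p hp
      have hmem : Ψ p ∈ Set.univ ×ˢ ({w₀} : Set W) := by rw [← hΨl]; exact ⟨p, hp, rfl⟩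
      refine ⟨(Ψ p).1 - (Ψ x).1, ?_⟩
      apply hΨ.1.1
      show Ψ _ = Ψ _
      rw [hΨγ, Prod.ext_iff]
      constructor
      · simp
      · exact hmem.2.symm
  -- Busemann coordinate and translations
  set B : X → ℝ := fun r => (Ψ r).1 - (Ψ x).1 with hBdef
  set T : ℝ → X → X := fun σ r => eΨ.symm ((Ψ r).1 + σ, (Ψ r).2) with hTdef
  have hΨT : ∀ σ r, Ψ (T σ r) = ((Ψ r).1 + σ, (Ψ r).2) := fun σ r => hΨe _
  have hBT : ∀ σ r, B (T σ r) = B r + σ := by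
    intro σ r; simp only [hBdef, hΨT]; ring
  have hT0 : ∀ r, T 0 r = r := by
    intro r
    apply eΨ.injective
    show Ψ _ = Ψ _
    rw [hΨT]
    exact Prod.ext_iff.mpr ⟨by simp, rfl⟩
  have hTγ : ∀ t, T t x = γ t := by
    intro t
    apply eΨ.injective
    show Ψ _ = Ψ _
    rw [hΨT, hΨγ, hw0]
  have hBγ : ∀ t, B (γ t) = t := by
    intro t; simp only [hBdef, hΨγ]; ring
  have hBx : B x = 0 := sub_self _
  have hrdist : ∀ u v : ℝ, dist u v ^ 2 = (u - v)^2 := by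
    intro u v; rw [Real.dist_eq, sq_abs]
  -- distance between translates
  have hTd : ∀ (s t : ℝ) (p q : X),
      dist (T s p) (T t q) ^ 2 = dist p q ^ 2 - 2*(t-s)*(B p - B q) + (t-s)^2 := by
    intro s t p q
    have h1 := hΨd (T s p) (T t q)
    rw [hΨT, hΨT] at h1
    have h2 := hΨd p q
    rw [hrdist] at h1 h2
    simp only [hBdef]
    linear_combination h1 - h2
  -- distance to line points
  have hdγ : ∀ (r : X) (t : ℝ),
      dist r (γ t) ^ 2 = (B r - t)^2 + dist (Ψ r).2 w₀ ^ 2 := by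
    intro r t
    have h1 := hΨd r (γ t)
    rw [hΨγ] at h1
    rw [hrdist] at h1
    simp only [hBdef]
    linear_combination h1
  have hdγγ : ∀ s t : ℝ, dist (γ s) (γ t) ^ 2 = (s - t)^2 := by
    intro s t
    rw [hdγ, hBγ, hΨγ]
    simp
  -- projection formula
  have hπeq : ∀ r, πY r = eΦ.symm ((Φ r).1, (Φ x).2) := by
    intro r
    set q := eΦ.symm ((Φ r).1, (Φ x).2) with hq
    have hΦq : Φ q = ((Φ r).1, (Φ x).2) := hΦe _
    have hqY : q ∈ {p | (Φ p).2 = (Φ x).2} := by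
      show (Φ q).2 = (Φ x).2
      rw [hΦq]
    have hdq : dist r q ^ 2 = dist (Φ r).2 (Φ x).2 ^ 2 := by
      rw [hΦd r q, hΦq]
      simp
    have hmin : ∀ a, (Φ a).2 = (Φ x).2 → dist r q ≤ dist r a := by
      intro a ha
      have h1 : dist r q ^ 2 ≤ dist r a ^ 2 := by
        rw [hdq, hΦd r a, ha]
        nlinarith [sq_nonneg (dist (Φ r).1 (Φ a).1)]
      exact le_of_sq_le_sq' h1 dist_nonneg
    obtain ⟨hmem, hle, huni⟩ := hπY r
    have h1 : dist r (πY r) ≤ dist r q := hle q hqY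
    have h2 : dist r q ≤ dist r (πY r) := hmin _ hmem
    exact (huni q hqY (le_antisymm h2 h1)).symm
  have hΦπ : ∀ r, Φ (πY r) = ((Φ r).1, (Φ x).2) := by
    intro r; rw [hπeq]; exact hΦe _
  have hπmem : ∀ r, (Φ (πY r)).2 = (Φ x).2 := by intro r; rw [hΦπ]
  have hπfix : ∀ p, (Φ p).2 = (Φ x).2 → πY p = p := by
    intro p hp
    rw [hπeq]
    apply eΦ.injective
    show Φ _ = Φ _
    rw [hΦe, Prod.ext_iff]
    exact ⟨rfl, hp.symm⟩
  have hπx : πY x = x := hπfix x rfl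
  -- F1 : Pythagoras decomposition of distances w.r.t. the Y-fiber
  have hdec : ∀ r r' : X,
      dist r r' ^ 2 = dist (πY r) (πY r') ^ 2 + dist (Φ r).2 (Φ r').2 ^ 2 := by
    intro r r'
    have h1 := hΦd (πY r) (πY r')
    rw [hΦπ r, hΦπ r'] at h1
    simp only [dist_self] at h1
    have h2 := hΦd r r'
    linear_combination h2 - h1
  -- Lemma A : the projected line is affine with speed c
  set n : ℝ → X := fun t => πY (γ t) with hndef
  have hn0 : n 0 = x := by rw [hndef]; simp only; rw [hγ0, hπx]
  set c : ℝ := dist (n 0) (n 1) with hcdef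
  have hab : ∀ s t : ℝ,
      dist (n s) (n t) ^ 2 + dist (Φ (γ s)).2 (Φ (γ t)).2 ^ 2 = (s-t)^2 := by
    intro s t
    have h1 := hdec (γ s) (γ t)
    rw [hdγγ] at h1
    linarith
  -- adjacency and additivity
  have hkey : ∀ s t u : ℝ, s < t → t < u →
      dist (n s) (n t) * (u - t) = dist (n t) (n u) * (t - s) ∧
      dist (n s) (n u) = dist (n s) (n t) + dist (n t) (n u) := by
    intro s t u hst htu
    have e1 : dist (n s) (n t) ^ 2 + dist (Φ (γ s)).2 (Φ (γ t)).2 ^ 2 = (t - s)^2 := by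
      linear_combination hab s t
    have e2 : dist (n t) (n u) ^ 2 + dist (Φ (γ t)).2 (Φ (γ u)).2 ^ 2 = (u - t)^2 := by
      linear_combination hab t u
    have he3 : dist (n s) (n u) ^ 2 + dist (Φ (γ s)).2 (Φ (γ u)).2 ^ 2
        = ((t - s) + (u - t))^2 := by linear_combination hab s u
    have t1 : dist (n s) (n u) ≤ dist (n s) (n t) + dist (n t) (n u) := dist_triangle _ _ _
    have t2 : dist (Φ (γ s)).2 (Φ (γ u)).2 ≤
        dist (Φ (γ s)).2 (Φ (γ t)).2 + dist (Φ (γ t)).2 (Φ (γ u)).2 := dist_triangle _ _ _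
    exact minkowski_forced dist_nonneg dist_nonneg dist_nonneg dist_nonneg
      dist_nonneg dist_nonneg (by linarith) (by linarith) e1 e2 he3 t1 t2
  -- global affinity
  have haff : ∀ s t : ℝ, s < t → dist (n s) (n t) = c * (t - s) := by
    intro s t hst
    set m := min s 0 - 1 with hm
    set M := max t 1 + 1 with hM
    have hms : m < s := by have := min_le_left s 0; simp only [hm]; linarith
    have hm0 : m < 0 := by have := min_le_right s 0; simp only [hm]; linarith
    have htM : t < M := by have := le_max_left t 1; simp only [hM]; linarith
    have h1M : (1:ℝ) < M := by have := le_max_right t 1; simp only [hM]; linarith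
    have h0M : (0:ℝ) < M := by linarith
    have hmM : m < M := by linarith
    -- step1 : a s M * (t - s) = a s t * (M - s)
    obtain ⟨r1, ad1⟩ := hkey s t M hst htM
    have step1 : dist (n s) (n M) * (t - s) = dist (n s) (n t) * (M - s) := by
      rw [ad1]; linear_combination (-1 : ℝ) * r1
    -- step2 : a m M * (M - s) = a s M * (M - m)
    obtain ⟨r2, ad2⟩ := hkey m s M hms (by linarith)
    have step2 : dist (n m) (n M) * (M - s) = dist (n s) (n M) * (M - m) := by
      rw [ad2]; linear_combination r2
    -- step1' : a 0 M = c * M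
    obtain ⟨r3, ad3⟩ := hkey 0 1 M (by norm_num) h1M
    have step3 : dist (n 0) (n M) * (1 - 0) = dist (n 0) (n 1) * (M - 0) := by
      rw [ad3]; linear_combination (-1 : ℝ) * r3
    -- step2' : a m M * M = a 0 M * (M - m)
    obtain ⟨r4, ad4⟩ := hkey m 0 M hm0 h0M
    have step4 : dist (n m) (n M) * (M - 0) = dist (n 0) (n M) * (M - m) := by
      rw [ad4]; linear_combination r4
    -- combine : a m M = c * (M - m)
    have step3' : dist (n 0) (n M) = c * M := by linear_combination step3
    have hmm : dist (n m) (n M) = c * (M - m) := by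
      have h5 : dist (n m) (n M) * M = (c * (M - m)) * M := by
        have step4' : dist (n m) (n M) * M = dist (n 0) (n M) * (M - m) := by
          linear_combination step4
        rw [step4', step3']; ring
      exact mul_right_cancel₀ (ne_of_gt h0M) h5
    -- a s t * (M - s) * (M - m) = c * (t - s) * (M - s) * (M - m)
    have hfin : dist (n s) (n t) * ((M - s) * (M - m)) = c * (t - s) * ((M - s) * (M - m)) := by
      calc dist (n s) (n t) * ((M - s) * (M - m))
          = (dist (n s) (n t) * (M - s)) * (M - m) := by ring
        _ = (dist (n s) (n M) * (t - s)) * (M - m) := by rw [step1]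
        _ = (dist (n s) (n M) * (M - m)) * (t - s) := by ring
        _ = (dist (n m) (n M) * (M - s)) * (t - s) := by rw [step2]
        _ = (c * (M - m) * (M - s)) * (t - s) := by rw [hmm]
        _ = c * (t - s) * ((M - s) * (M - m)) := by ring
    have hpos : (M - s) * (M - m) ≠ 0 := by
      apply ne_of_gt
      apply mul_pos <;> linarith
    exact mul_right_cancel₀ hpos hfin
  have hA : ∀ s t : ℝ, dist (n s) (n t) = c * |s - t| := by
    intro s t
    rcases lt_trichotomy s t with h | h | h
    · rw [haff s t h, abs_of_neg (by linarith : s - t < 0)]; ring_nf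
    · rw [h]; simp
    · rw [dist_comm, haff t s h, abs_of_pos (by linarith : 0 < s - t)]
  have hc0 : 0 ≤ c := dist_nonneg
  have hc1 : c ≤ 1 := by
    have := hab 0 1
    rw [← hcdef] at this
    nlinarith [dist_nonneg (x := (Φ (γ 0)).2) (y := (Φ (γ 1)).2), hc0]
  have hc2le : c^2 ≤ 1 := by nlinarith
  -- quadratic formula for distances from fiber points to the projected line
  have hQ2 : ∀ p, (Φ p).2 = (Φ x).2 → ∀ t : ℝ,
      dist p (n t)^2 = c^2*t^2 - 2*t*(B p) + dist p x^2 := by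
    intro p hp t
    have h1 := hdec p (γ t)
    rw [hπfix p hp] at h1
    have h2 := hdec x (γ t)
    rw [hπx] at h2
    have h3' : dist (Φ p).2 (Φ (γ t)).2 ^2 = dist (Φ x).2 (Φ (γ t)).2 ^2 := by rw [hp]
    have h4 : dist x (γ t)^2 = t^2 := by
      rw [hdγ x t, hBx, hw0]
      simp
    have h5 : dist x (n t) ^2 = c^2 * t^2 := by
      rw [← hn0, hA 0 t, mul_pow, sq_abs]
      ring
    have h6 := hdγ p t
    have h7 := hdγ p 0
    rw [hγ0] at h7
    linear_combination (-1)*h1 + h6 + (-1)*h3' + h2 + (-1)*h4 + h5 + (-1)*h7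
  -- Lipschitz bound for B on the fiber
  have hL1 : ∀ p q, (Φ p).2 = (Φ x).2 → (Φ q).2 = (Φ x).2 →
      (B p - B q)^2 ≤ c^2 * dist p q ^2 := by
    intro p q hp hq
    have hg : ∀ t : ℝ, 0 ≤ (4*c^2*dist p q^2 - 4*(B p - B q)^2) * t^2
        + (4*(B p - B q)*(dist p x^2 - dist q x^2) - 4*dist p q^2*(B p + B q)) * t
        + (2*dist p q^2*(dist p x^2 + dist q x^2) - (dist p x^2 - dist q x^2)^2
            - dist p q^2 ^2) := by
      intro t
      have e1 := hQ2 p hp t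
      have e2 := hQ2 q hq t
      have tri1 : dist p q ≤ dist p (n t) + dist q (n t) := by
        have h := dist_triangle p (n t) q
        rw [dist_comm (n t) q] at h
        linarith
      have tri2 : dist p (n t) ≤ dist p q + dist q (n t) := by
        have h := dist_triangle p q (n t)
        linarith
      have tri3 : dist q (n t) ≤ dist p q + dist p (n t) := by
        have h := dist_triangle q p (n t)
        rw [dist_comm q p] at h
        linarith
      have hfp := four_point_sq (dist_nonneg (x := p) (y := n t))
        (dist_nonneg (x := q) (y := n t)) (dist_nonneg (x := p) (y := q)) tri1 tri2 tri3
      have hid : (4*c^2*dist p q^2 - 4*(B p - B q)^2) * t^2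
        + (4*(B p - B q)*(dist p x^2 - dist q x^2) - 4*dist p q^2*(B p + B q)) * t
        + (2*dist p q^2*(dist p x^2 + dist q x^2) - (dist p x^2 - dist q x^2)^2
            - dist p q^2 ^2)
          = 4*(dist p (n t)^2)*(dist q (n t)^2)
            - (dist p (n t)^2 + dist q (n t)^2 - dist p q^2)^2 := by
        rw [e1, e2]; ring
      rw [hid]
      linarith
    have := quad_lead_nonneg hg
    linarith
  -- quadratic formula for the Z-components
  have hQ3 : ∀ (r : X) (t : ℝ), dist (Φ r).2 (Φ (γ t)).2 ^2
      = (1 - c^2)*t^2 - 2*t*(B r - B (πY r)) + dist (Φ r).2 (Φ x).2 ^2 := by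
    intro r t
    have h1 := hdec r (γ t)
    have h2 := hQ2 (πY r) (hπmem r) t
    have h3 := hdγ r t
    have h4 := hdec r x
    rw [hπx] at h4
    have h5 := hdγ r 0
    rw [hγ0] at h5
    linear_combination (-1)*h1 + (-1)*h2 + h3 + h4 + (-1)*h5
  -- Lipschitz bound for w on Z-components
  have hL2 : ∀ r r' : X,
      ((B r - B (πY r)) - (B r' - B (πY r')))^2 ≤ (1 - c^2) * dist (Φ r).2 (Φ r').2 ^2 := by
    intro r r'
    set w1 := B r - B (πY r) with hw1
    set w2 := B r' - B (πY r') with hw2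
    set d := dist (Φ r).2 (Φ r').2 with hd
    set K1 := dist (Φ r).2 (Φ x).2 with hK1
    set K2 := dist (Φ r').2 (Φ x).2 with hK2
    have hg : ∀ t : ℝ, 0 ≤ (4*(1-c^2)*d^2 - 4*(w1 - w2)^2) * t^2
        + (4*(w1 - w2)*(K1^2 - K2^2) - 4*d^2*(w1 + w2)) * t
        + (2*d^2*(K1^2 + K2^2) - (K1^2 - K2^2)^2 - d^2 ^2) := by
      intro t
      have e1 := hQ3 r t
      have e2 := hQ3 r' t
      have tri1 : d ≤ dist (Φ r).2 (Φ (γ t)).2 + dist (Φ r').2 (Φ (γ t)).2 := by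
        have h := dist_triangle (Φ r).2 (Φ (γ t)).2 (Φ r').2
        rw [dist_comm (Φ (γ t)).2 (Φ r').2] at h
        exact h
      have tri2 : dist (Φ r).2 (Φ (γ t)).2 ≤ d + dist (Φ r').2 (Φ (γ t)).2 := by
        have h := dist_triangle (Φ r).2 (Φ r').2 (Φ (γ t)).2
        linarith
      have tri3 : dist (Φ r').2 (Φ (γ t)).2 ≤ d + dist (Φ r).2 (Φ (γ t)).2 := by
        have h := dist_triangle (Φ r').2 (Φ r).2 (Φ (γ t)).2
        rw [dist_comm (Φ r').2 (Φ r).2] at h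
        linarith
      have hfp := four_point_sq (dist_nonneg (x := (Φ r).2) (y := (Φ (γ t)).2))
        (dist_nonneg (x := (Φ r').2) (y := (Φ (γ t)).2)) (dist_nonneg (x := (Φ r).2) (y := (Φ r').2))
        tri1 tri2 tri3
      have hid : (4*(1-c^2)*d^2 - 4*(w1 - w2)^2) * t^2
        + (4*(w1 - w2)*(K1^2 - K2^2) - 4*d^2*(w1 + w2)) * t
        + (2*d^2*(K1^2 + K2^2) - (K1^2 - K2^2)^2 - d^2 ^2)
          = 4*(dist (Φ r).2 (Φ (γ t)).2^2)*(dist (Φ r').2 (Φ (γ t)).2^2)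
            - (dist (Φ r).2 (Φ (γ t)).2^2 + dist (Φ r').2 (Φ (γ t)).2^2 - d^2)^2 := by
        rw [e1, e2]; ring
      rw [hid]
      linarith
    have := quad_lead_nonneg hg
    linarith
  have hnγ : ∀ t, πY (γ t) = n t := fun t => rfl
  clear hγdef hBdef hTdef hndef hcdef heΦ heΨ
  clear_value eΦ eΨ γ B T n c
  -- main case split
  rcases eq_or_lt_of_le hc0 with hceq | hcpos
  · -- c = 0 : the projection of the line is a single point
    left
    refine ⟨x, ?_⟩
    rw [← hγrange]
    ext y
    simp only [Set.mem_image, Set.mem_range, Set.mem_singleton_iff]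
    constructor
    · rintro ⟨p, ⟨t, rfl⟩, rfl⟩
      have h1 : dist (n t) (n 0) = 0 := by
        rw [hA t 0, ← hceq]; ring
      have h2 : n t = n 0 := dist_eq_zero.mp h1
      rw [hnγ t, h2]
      exact hn0
    · intro hy
      refine ⟨γ 0, ⟨0, rfl⟩, ?_⟩
      rw [hnγ 0, hn0]
      exact hy.symm
  · -- c > 0 : the projection is a splitting line of Y
    right
    have hc2pos : (0:ℝ) < c^2 := pow_pos hcpos 2
    have hcne : c ≠ 0 := ne_of_gt hcpos
    have hc2ne : c^2 ≠ 0 := ne_of_gt hc2pos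
    -- forced equality for translated fiber points
    have hFE : ∀ p, (Φ p).2 = (Φ x).2 → ∀ σ : ℝ,
        B (πY (T σ p)) = B p + c^2*σ ∧ dist (πY (T σ p)) p ^2 = c^2*σ^2 := by
      intro p hp σ
      have hTσ : dist (T σ p) p ^2 = σ^2 := by
        have h := hTd σ 0 p p
        rw [hT0, dist_self] at h
        linear_combination h
      have h1 : dist (T σ p) p ^2
          = dist (πY (T σ p)) p ^2 + dist (Φ (T σ p)).2 (Φ p).2 ^2 := by
        have h := hdec (T σ p) p
        rwa [hπfix p hp] at h
      have h2 := hL1 (πY (T σ p)) p (hπmem _) hp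
      have h3 := hL2 (T σ p) p
      rw [hπfix p hp, hBT] at h3
      have k1 := mul_le_mul_of_nonneg_left h2 (by linarith : (0:ℝ) ≤ 1 - c^2)
      have k2 := mul_le_mul_of_nonneg_left h3 (le_of_lt hc2pos)
      have h4' : dist (πY (T σ p)) p ^2 + dist (Φ (T σ p)).2 (Φ p).2 ^2 = σ^2 := by
        linarith [h1, hTσ]
      have h4 : c^2*(1-c^2)*(dist (πY (T σ p)) p ^2 + dist (Φ (T σ p)).2 (Φ p).2 ^2)
          = c^2*(1-c^2)*σ^2 := by
        linear_combination (c^2*(1-c^2))*h4'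
      have e0 : (B (πY (T σ p)) - B p - c^2*σ)^2
          = (1-c^2)*(B (πY (T σ p)) - B p)^2
            + c^2*(B p + σ - B (πY (T σ p)) - (B p - B p))^2
            - c^2*(1-c^2)*σ^2 := by ring
      have key : (B (πY (T σ p)) - B p - c^2*σ)^2 ≤ 0 := by linarith [k1, k2, h4, e0]
      have h0 : (B (πY (T σ p)) - B p - c^2*σ)^2 = 0 := le_antisymm key (sq_nonneg _)
      have hBeq : B (πY (T σ p)) = B p + c^2*σ := by
        have := sq_eq_zero_iff.mp h0
        linarith
      refine ⟨hBeq, ?_⟩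
      have hμ : (B (πY (T σ p)) - B p)^2 = c^4*σ^2 := by rw [hBeq]; ring
      have low : c^2*σ^2 ≤ dist (πY (T σ p)) p ^2 := by
        nlinarith [h2, hμ, hc2pos]
      rcases eq_or_lt_of_le hc2le with hc2 | hc2
      · have hup : dist (πY (T σ p)) p ^2 ≤ σ^2 := by
          nlinarith [h4', sq_nonneg (dist (Φ (T σ p)).2 (Φ p).2)]
        have hcs : c^2*σ^2 = σ^2 := by rw [hc2]; ring
        linarith
      · have e : B p + σ - B (πY (T σ p)) - (B p - B p) = (1-c^2)*σ := by
          rw [hBeq]; ring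
        rw [e] at h3
        have hb : (1-c^2)*σ^2 ≤ dist (Φ (T σ p)).2 (Φ p).2 ^2 := by
          nlinarith [h3, hc2]
        linarith [h4', hb, low]
    -- general contraction bound for translated-projected points
    have hGEN : ∀ p q, (Φ p).2 = (Φ x).2 → (Φ q).2 = (Φ x).2 → ∀ s t : ℝ,
        dist (πY (T s p)) (πY (T t q)) ^2
          ≤ dist p q^2 - 2*(t-s)*(B p - B q) + c^2*(t-s)^2 := by
      intro p q hp hq s t
      have h1 := hdec (T s p) (T t q)
      have h2 := hTd s t p q
      have h3 := hL2 (T s p) (T t q)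
      have hws : B (T s p) - B (πY (T s p)) = (1-c^2)*s := by
        rw [hBT, (hFE p hp s).1]; ring
      have hwt : B (T t q) - B (πY (T t q)) = (1-c^2)*t := by
        rw [hBT, (hFE q hq t).1]; ring
      rw [hws, hwt] at h3
      have hZlow : (1-c^2)*(t-s)^2 ≤ dist (Φ (T s p)).2 (Φ (T t q)).2 ^2 := by
        rcases eq_or_lt_of_le hc2le with hc2 | hc2
        · have e : (1-c^2)*(t-s)^2 = 0 := by rw [hc2]; ring
          linarith [sq_nonneg (dist (Φ (T s p)).2 (Φ (T t q)).2)]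
        · have h5 : (0:ℝ) < 1 - c^2 := by linarith
          by_contra hcon
          push_neg at hcon
          have h6 : 0 < (1-c^2)*(t-s)^2 - dist (Φ (T s p)).2 (Φ (T t q)).2 ^2 := by
            linarith
          have h7 : 0 < (1-c^2)*((1-c^2)*(t-s)^2 - dist (Φ (T s p)).2 (Φ (T t q)).2 ^2) :=
            mul_pos h5 h6
          have key : (1-c^2)*((1-c^2)*(t-s)^2 - dist (Φ (T s p)).2 (Φ (T t q)).2 ^2) ≤ 0 := by
            linarith [h3]
          linarith
      linarith [h1, h2, hZlow]
    -- inverse property of the translation flow on the fiber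
    have hINV : ∀ p, (Φ p).2 = (Φ x).2 → ∀ σ : ℝ, πY (T (-σ) (πY (T σ p))) = p := by
      intro p hp σ
      have h := hGEN (πY (T σ p)) p (hπmem _) hp (-σ) 0
      rw [hT0, hπfix p hp] at h
      have hB1 := (hFE p hp σ).1
      have hd1 := (hFE p hp σ).2
      rw [hB1, hd1] at h
      have hle : dist (πY (T (-σ) (πY (T σ p)))) p ^2 ≤ 0 := by linarith [h]
      have h0 : dist (πY (T (-σ) (πY (T σ p)))) p ^2 = 0 := le_antisymm hle (sq_nonneg _)
      exact dist_eq_zero.mp (sq_eq_zero_iff.mp h0)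
    -- exact Pythagoras for the projection to the zero-level of B
    have hPYTH : ∀ p q (u v : ℝ), (Φ p).2 = (Φ x).2 → (Φ q).2 = (Φ x).2 →
        B p = c^2*u → B q = c^2*v →
        dist p q^2 = c^2*(u - v)^2 + dist (πY (T (-u) p)) (πY (T (-v) q))^2 := by
      intro p q u v hp hq hBp hBq
      have hup := hGEN p q hp hq (-u) (-v)
      rw [hBp, hBq] at hup
      have hip : πY (T u (πY (T (-u) p))) = p := by
        have h := hINV p hp (-u)
        rwa [neg_neg] at h
      have hiq : πY (T v (πY (T (-v) q))) = q := by
        have h := hINV q hq (-v)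
        rwa [neg_neg] at h
      have hlo := hGEN (πY (T (-u) p)) (πY (T (-v) q)) (hπmem _) (hπmem _) u v
      rw [hip, hiq] at hlo
      have hBPu : B (πY (T (-u) p)) = 0 := by
        rw [(hFE p hp (-u)).1, hBp]; ring
      have hBPv : B (πY (T (-v) q)) = 0 := by
        rw [(hFE q hq (-v)).1, hBq]; ring
      rw [hBPu, hBPv] at hlo
      have hup' : dist (πY (T (-u) p)) (πY (T (-v) q)) ^2
          ≤ dist p q^2 - c^2*(u-v)^2 := by nlinarith [hup]
      have hlo' : dist p q ^2 ≤ dist (πY (T (-u) p)) (πY (T (-v) q)) ^2 + c^2*(u-v)^2 := by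
        nlinarith [hlo]
      linarith
    -- facts about the projected line
    have hnmem : ∀ t : ℝ, (Φ (n t)).2 = (Φ x).2 := by
      intro t; rw [← hnγ t]; exact hπmem _
    have hBn : ∀ t : ℝ, B (n t) = c^2*t := by
      intro t
      have h := (hFE x rfl t).1
      rw [hTγ t, hnγ t, hBx] at h
      linarith
    have hPn : ∀ t : ℝ, πY (T (-t) (n t)) = x := by
      intro t
      have h := hINV x rfl t
      rwa [hTγ t, hnγ t] at h
    have hz0 : ∀ t : ℝ, πY (T (-(B (πY (γ t)) / c^2)) (πY (γ t))) = x := by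
      intro t
      rw [hnγ t, hBn t]
      have harg : -(c^2*t/c^2) = -t := by field_simp
      rw [harg]
      exact hPn t
    constructor
    · -- IsLine
      refine ⟨fun t => ⟨n (t/c), by rw [← hnγ]; exact (hπY (γ (t/c))).1⟩, ?_, ?_⟩
      · apply Isometry.of_dist_eq
        intro a b
        rw [Subtype.dist_eq]
        show dist (n (a/c)) (n (b/c)) = dist a b
        rw [hA (a/c) (b/c), Real.dist_eq]
        have e : a/c - b/c = (a-b)/c := by ring
        rw [e, abs_div, abs_of_pos hcpos]
        field_simp
      · rw [← hγrange, ← Set.range_comp]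
        ext el
        simp only [Set.mem_range, Function.comp]
        constructor
        · rintro ⟨t, rfl⟩
          exact ⟨t/c, Subtype.ext (hnγ (t/c))⟩
        · rintro ⟨t, rfl⟩
          refine ⟨c*t, Subtype.ext ?_⟩
          show n ((c*t)/c) = πY (γ t)
          rw [mul_div_cancel_left₀ t hcne, ← hnγ]
    · -- splitting data
      refine ⟨{r : X // (Φ r).2 = (Φ x).2 ∧ B r = 0}, inferInstance,
        fun p => (B p.val / c,
          ⟨πY (T (-(B p.val / c^2)) p.val),
            hπmem _, by rw [(hFE p.val p.2 (-(B p.val / c^2))).1]; field_simp; ring⟩),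
        ⟨x, rfl, hBx⟩, ⟨⟨?_, ?_⟩, ?_⟩, ?_⟩
      · -- injective
        intro p q h
        rw [Prod.ext_iff] at h
        obtain ⟨h1, h2⟩ := h
        have hB : B p.val = B q.val := by
          field_simp [hcne] at h1
          exact h1
        have h2v : πY (T (-(B p.val / c^2)) p.val) = πY (T (-(B q.val / c^2)) q.val) :=
          congrArg Subtype.val h2
        have hu : B p.val = c^2 * (B p.val / c^2) := by field_simp
        have hv : B q.val = c^2 * (B q.val / c^2) := by field_simp
        have h := hPYTH p.val q.val (B p.val / c^2) (B q.val / c^2) p.2 q.2 hu hv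
        rw [h2v] at h
        rw [dist_self] at h
        have hd0 : dist p.val q.val ^2 = 0 := by
          rw [h, hB]
          ring
        exact Subtype.ext (dist_eq_zero.mp (sq_eq_zero_iff.mp hd0))
      · -- surjective
        rintro ⟨t, z⟩
        obtain ⟨r, hrY, hrB⟩ := z
        have hBr : B (πY (T (t/c) r)) = c*t := by
          rw [(hFE r hrY (t/c)).1, hrB]
          field_simp
          ring
        refine ⟨⟨πY (T (t/c) r), hπmem _⟩, ?_⟩
        rw [Prod.ext_iff]
        constructor
        · show B (πY (T (t/c) r)) / c = t
          rw [hBr]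
          field_simp
        · apply Subtype.ext
          show πY (T (-(B (πY (T (t/c) r)) / c^2)) (πY (T (t/c) r))) = r
          rw [hBr]
          have harg : -(c*t/c^2) = -(t/c) := by
            field_simp
          rw [harg]
          exact hINV r hrY (t/c)
      · -- the ℓ² distance identity
        intro p q
        show dist p q ^2 = dist (B p.val / c) (B q.val / c) ^2
          + dist (⟨πY (T (-(B p.val / c^2)) p.val), _⟩ : {r : X // (Φ r).2 = (Φ x).2 ∧ B r = 0})
              ⟨πY (T (-(B q.val / c^2)) q.val), _⟩ ^2
        rw [Subtype.dist_eq p q, Subtype.dist_eq, hrdist]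
        have hu : B p.val = c^2 * (B p.val / c^2) := by field_simp
        have hv : B q.val = c^2 * (B q.val / c^2) := by field_simp
        have h := hPYTH p.val q.val (B p.val / c^2) (B q.val / c^2) p.2 q.2 hu hv
        show dist p.val q.val ^2 = (B p.val / c - B q.val / c)^2
          + dist (πY (T (-(B p.val / c^2)) p.val)) (πY (T (-(B q.val / c^2)) q.val)) ^2
        rw [h]
        have : c^2*(B p.val / c^2 - B q.val / c^2)^2 = (B p.val / c - B q.val / c)^2 := by
          field_simp
        rw [this]
      · -- image of the line is ℝ × {z₀}
        rw [← hγrange, ← Set.range_comp, ← Set.range_comp]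
        ext el
        simp only [Set.mem_range, Function.comp, Set.mem_prod, Set.mem_univ, true_and,
          Set.mem_singleton_iff]
        constructor
        · rintro ⟨t, rfl⟩
          exact Subtype.ext (hz0 t)
        · intro hel
          refine ⟨el.1/c, ?_⟩
          have h1 : B (πY (γ (el.1/c))) / c = el.1 := by
            rw [hnγ, hBn]
            field_simp
          have h2 : (⟨πY (T (-(B (πY (γ (el.1/c))) / c^2)) (πY (γ (el.1/c)))), hπmem _,
              by rw [(hFE (πY (γ (el.1/c))) (hπmem _) _).1]; field_simp; ring⟩ :
              {r : X // (Φ r).2 = (Φ x).2 ∧ B r = 0}) = el.2 := by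
            rw [hel]
            exact Subtype.ext (hz0 (el.1/c))
          rw [Prod.ext_iff]
          exact ⟨h1, h2⟩
end
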